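/- arXiv:2203.01694 — 5 statements merged into one kernel-verified Lean document; each statement's English description precedes it below -/
import Mathlib

section
/- Three pairwise disjoint lines in P^3 lie on a unique quadric surface, and this quadric is smooth. -/
set_option maxHeartbeats 1600000
set_option synthInstance.maxHeartbeats 400000

open MvPolynomial

private lemma deg2_classify (d : Fin 4 →₀ ℕ) (hd : d.degree = 2) :
    ∃ a b : Fin 4, d = Finsupp.single a 1 + Finsupp.single b 1 := by
  have hsum : d 0 + d 1 + d 2 + d 3 = 2 := by
    have h : ∑ i : Fin 4, d i = d.degree :=
      (Finset.sum_subset (Finset.subset_univ _)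
        (fun x _ hx => Finsupp.notMem_support_iff.mp hx)).symm
    rw [Fin.sum_univ_four] at h
    omega
  have h0 : d 0 = 0 ∨ d 0 = 1 ∨ d 0 = 2 := by omega
  have h1 : d 1 = 0 ∨ d 1 = 1 ∨ d 1 = 2 := by omega
  have h2 : d 2 = 0 ∨ d 2 = 1 ∨ d 2 = 2 := by omega
  have h3 : d 3 = 0 ∨ d 3 = 1 ∨ d 3 = 2 := by omega
  rcases h0 with h0|h0|h0 <;> rcases h1 with h1|h1|h1 <;> rcases h2 with h2|h2|h2 <;>
    rcases h3 with h3|h3|h3 <;> try omega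
  · exact ⟨3, 3, by ext i; fin_cases i <;> simp [Finsupp.single_apply, h0, h1, h2, h3]⟩
  · exact ⟨2, 3, by ext i; fin_cases i <;> simp [Finsupp.single_apply, h0, h1, h2, h3]⟩
  · exact ⟨2, 2, by ext i; fin_cases i <;> simp [Finsupp.single_apply, h0, h1, h2, h3]⟩
  · exact ⟨1, 3, by ext i; fin_cases i <;> simp [Finsupp.single_apply, h0, h1, h2, h3]⟩
  · exact ⟨1, 2, by ext i; fin_cases i <;> simp [Finsupp.single_apply, h0, h1, h2, h3]⟩
  · exact ⟨1, 1, by ext i; fin_cases i <;> simp [Finsupp.single_apply, h0, h1, h2, h3]⟩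
  · exact ⟨0, 3, by ext i; fin_cases i <;> simp [Finsupp.single_apply, h0, h1, h2, h3]⟩
  · exact ⟨0, 2, by ext i; fin_cases i <;> simp [Finsupp.single_apply, h0, h1, h2, h3]⟩
  · exact ⟨0, 1, by ext i; fin_cases i <;> simp [Finsupp.single_apply, h0, h1, h2, h3]⟩
  · exact ⟨0, 0, by ext i; fin_cases i <;> simp [Finsupp.single_apply, h0, h1, h2, h3]⟩

private lemma mono_eq (a b : Fin 4) (c : ℂ) :
    (monomial (Finsupp.single a 1 + Finsupp.single b 1)) c = C c * X a * X b := by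
  have hX : ∀ s : Fin 4, (X s : MvPolynomial (Fin 4) ℂ) = monomial (Finsupp.single s 1) 1 :=
    fun s => rfl
  rw [hX, hX, mul_assoc, monomial_mul, C_mul_monomial]
  simp

private lemma eval_pp (a b i j : Fin 4) (c : ℂ) :
    eval (0 : Fin 4 → ℂ) (pderiv i (pderiv j (C c * X a * X b)))
      = c * ((if a = i then 1 else 0) * (if b = j then 1 else 0)
           + (if b = i then 1 else 0) * (if a = j then 1 else 0)) := by
  classical
  by_cases hbj : b = j <;> by_cases haj : a = j <;> by_cases hai : a = i <;>
    by_cases hbi : b = i <;> subst_vars <;>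
    simp_all [pderiv_mul, pderiv_X, Pi.single_apply, mul_comm] <;> ring

private lemma rep_mono (a b : Fin 4) (c : ℂ) (x : Fin 4 → ℂ) :
    ∑ i : Fin 4, ∑ j : Fin 4,
      eval 0 (pderiv i (pderiv j (C c * X a * X b))) * x i * x j
    = 2 * eval x (C c * X a * X b) := by
  classical
  have key : ∀ i j : Fin 4,
      eval (0 : Fin 4 → ℂ) (pderiv i (pderiv j (C c * X a * X b))) * x i * x j
      = (if a = i then (if b = j then c * x i * x j else 0) else 0)
      + (if b = i then (if a = j then c * x i * x j else 0) else 0) := by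
    intro i j
    rw [eval_pp]
    by_cases hai : a = i <;> by_cases hbj : b = j <;> by_cases hbi : b = i <;>
      by_cases haj : a = j <;> simp [hai, hbj, hbi, haj] <;> split_ifs <;>
      first | ring | simp_all
  simp only [key, Finset.sum_add_distrib, Finset.sum_ite_eq, Finset.mem_univ, if_true]
  simp [eval_mul, mul_comm, mul_assoc]
  ring

private lemma rep (q : MvPolynomial (Fin 4) ℂ) (hq : q.IsHomogeneous 2) (x : Fin 4 → ℂ) :
    ∑ i : Fin 4, ∑ j : Fin 4, eval 0 (pderiv i (pderiv j q)) * x i * x j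
    = 2 * eval x q := by
  conv_lhs => rw [q.as_sum]
  conv_rhs => rw [q.as_sum]
  rw [map_sum, Finset.mul_sum]
  have lhs_eq : ∀ i j : Fin 4, eval (0:Fin 4 → ℂ)
      (pderiv i (pderiv j (∑ d ∈ q.support, monomial d (coeff d q)))) * x i * x j
      = ∑ d ∈ q.support, eval 0 (pderiv i (pderiv j (monomial d (coeff d q)))) * x i * x j := by
    intro i j
    rw [map_sum, map_sum, map_sum, Finset.sum_mul, Finset.sum_mul]
  simp only [lhs_eq]
  rw [show (∑ i : Fin 4, ∑ j : Fin 4, ∑ d ∈ q.support,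
        eval 0 (pderiv i (pderiv j (monomial d (coeff d q)))) * x i * x j)
      = ∑ d ∈ q.support, ∑ i : Fin 4, ∑ j : Fin 4,
        eval 0 (pderiv i (pderiv j (monomial d (coeff d q)))) * x i * x j from
    (Finset.sum_congr rfl (fun i _ => Finset.sum_comm)).trans Finset.sum_comm]
  refine Finset.sum_congr rfl (fun d hd => ?_)
  have hdeg : d.degree = 2 := by
    by_contra h
    exact (mem_support_iff.mp hd) (hq.coeff_eq_zero h)
  obtain ⟨a, b, rfl⟩ := deg2_classify d hdeg
  rw [mono_eq, rep_mono]

/-- Three pairwise disjoint lines in ℙ³ lie on a unique quadric surface,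
and this quadric is smooth.

Lines are 2-dimensional linear subspaces of ℂ⁴ (disjoint in ℙ³ means trivially
intersecting subspaces); a quadric surface is the vanishing set of a nonzero homogeneous
degree-2 polynomial; smoothness means the gradient is nonzero at every point of the
quadric; uniqueness means every quadric surface containing the three lines has the same
zero set. -/
theorem stmt_11 (W₁ W₂ W₃ : Submodule ℂ (Fin 4 → ℂ))
    (h1 : Module.finrank ℂ W₁ = 2) (h2 : Module.finrank ℂ W₂ = 2)
    (h3 : Module.finrank ℂ W₃ = 2)
    (h12 : W₁ ⊓ W₂ = ⊥) (h13 : W₁ ⊓ W₃ = ⊥) (h23 : W₂ ⊓ W₃ = ⊥) :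
    ∃ q : MvPolynomial (Fin 4) ℂ, q ≠ 0 ∧ q.IsHomogeneous 2 ∧
      (∀ w ∈ W₁, MvPolynomial.eval w q = 0) ∧
      (∀ w ∈ W₂, MvPolynomial.eval w q = 0) ∧
      (∀ w ∈ W₃, MvPolynomial.eval w q = 0) ∧
      -- the quadric is smooth
      (∀ x : Fin 4 → ℂ, x ≠ 0 → MvPolynomial.eval x q = 0 →
        ∃ i : Fin 4, MvPolynomial.eval x (MvPolynomial.pderiv i q) ≠ 0) ∧
      -- the quadric surface is unique
      (∀ q' : MvPolynomial (Fin 4) ℂ, q' ≠ 0 → q'.IsHomogeneous 2 →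
        (∀ w ∈ W₁, MvPolynomial.eval w q' = 0) →
        (∀ w ∈ W₂, MvPolynomial.eval w q' = 0) →
        (∀ w ∈ W₃, MvPolynomial.eval w q' = 0) →
        {x : Fin 4 → ℂ | MvPolynomial.eval x q' = 0}
          = {x : Fin 4 → ℂ | MvPolynomial.eval x q = 0}) := by
  classical
  have hV : Module.finrank ℂ (Fin 4 → ℂ) = 4 := by simp
  have hsup : W₁ ⊔ W₂ = ⊤ := by
    apply Submodule.eq_top_of_finrank_eq
    have h := Submodule.finrank_sup_add_finrank_inf_eq W₁ W₂
    rw [h12, finrank_bot, h1, h2] at h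
    rw [hV]
    omega
  have hcompl : IsCompl W₁ W₂ := ⟨disjoint_iff.mpr h12, codisjoint_iff.mpr hsup⟩
  set p₁ := W₁.projectionOnto W₂ hcompl with hp₁
  set p₂ := W₂.projectionOnto W₁ hcompl.symm with hp₂
  have hdecomp : ∀ x : Fin 4 → ℂ, (p₁ x : Fin 4 → ℂ) + p₂ x = x := fun x =>
    Submodule.projection_add_projection_eq_self hcompl x
  set wb := Module.finBasisOfFinrankEq ℂ W₃ h3 with hwb
  set u : Fin 4 → (Fin 4 → ℂ) := ![p₁ (wb 0), p₁ (wb 1), p₂ (wb 0), p₂ (wb 1)] with hu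
  have hu0 : u 0 ∈ W₁ := (p₁ _).2
  have hu1 : u 1 ∈ W₁ := (p₁ _).2
  have hu2 : u 2 ∈ W₂ := (p₂ _).2
  have hu3 : u 3 ∈ W₂ := (p₂ _).2
  have hw0 : u 0 + u 2 = (wb 0 : Fin 4 → ℂ) := hdecomp _
  have hw1 : u 1 + u 3 = (wb 1 : Fin 4 → ℂ) := hdecomp _
  have hli : LinearIndependent ℂ u := by
    rw [Fintype.linearIndependent_iff]
    intro g hg
    have hsplit : (g 0 • u 0 + g 1 • u 1) + (g 2 • u 2 + g 3 • u 3) = 0 := by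
      rw [Fin.sum_univ_four] at hg
      linear_combination (norm := module) hg
    have hmem1 : g 0 • u 0 + g 1 • u 1 ∈ W₁ :=
      add_mem (Submodule.smul_mem _ _ hu0) (Submodule.smul_mem _ _ hu1)
    have hmem2 : g 2 • u 2 + g 3 • u 3 ∈ W₂ :=
      add_mem (Submodule.smul_mem _ _ hu2) (Submodule.smul_mem _ _ hu3)
    have hz1 : g 0 • u 0 + g 1 • u 1 = 0 := by
      have : g 0 • u 0 + g 1 • u 1 ∈ W₁ ⊓ W₂ := by
        refine ⟨hmem1, ?_⟩
        have : g 0 • u 0 + g 1 • u 1 = -(g 2 • u 2 + g 3 • u 3) := by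
          linear_combination (norm := module) hsplit
        rw [this]; exact neg_mem hmem2
      rw [h12] at this; exact this
    have hz2 : g 2 • u 2 + g 3 • u 3 = 0 := by
      rw [hz1, zero_add] at hsplit; exact hsplit
    -- first pair
    have hgw1 : (p₁ (g 0 • (wb 0 : Fin 4 → ℂ) + g 1 • wb 1) : Fin 4 → ℂ) = g 0 • u 0 + g 1 • u 1 := by
      rw [p₁.map_add, p₁.map_smul, p₁.map_smul]
      push_cast
      simp [hu]
    have hv1 : g 0 • (wb 0 : Fin 4 → ℂ) + g 1 • wb 1 = 0 := by
      have hker : g 0 • (wb 0 : Fin 4 → ℂ) + g 1 • wb 1 ∈ W₂ := by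
        rw [← Submodule.linearProjOfIsCompl_apply_eq_zero_iff (h := hcompl)]
        rw [← Submodule.coe_eq_zero, hgw1, hz1]
      have hmem3 : g 0 • (wb 0 : Fin 4 → ℂ) + g 1 • wb 1 ∈ W₃ :=
        add_mem (Submodule.smul_mem _ _ (wb 0).2) (Submodule.smul_mem _ _ (wb 1).2)
      have : g 0 • (wb 0 : Fin 4 → ℂ) + g 1 • wb 1 ∈ W₂ ⊓ W₃ := ⟨hker, hmem3⟩
      rw [h23] at this; exact this
    have hgw2 : (p₂ (g 2 • (wb 0 : Fin 4 → ℂ) + g 3 • wb 1) : Fin 4 → ℂ) = g 2 • u 2 + g 3 • u 3 := by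
      rw [p₂.map_add, p₂.map_smul, p₂.map_smul]
      push_cast
      simp [hu]
    have hv2 : g 2 • (wb 0 : Fin 4 → ℂ) + g 3 • wb 1 = 0 := by
      have hker : g 2 • (wb 0 : Fin 4 → ℂ) + g 3 • wb 1 ∈ W₁ := by
        rw [← Submodule.linearProjOfIsCompl_apply_eq_zero_iff (h := hcompl.symm)]
        rw [← Submodule.coe_eq_zero, hgw2, hz2]
      have hmem3 : g 2 • (wb 0 : Fin 4 → ℂ) + g 3 • wb 1 ∈ W₃ :=
        add_mem (Submodule.smul_mem _ _ (wb 0).2) (Submodule.smul_mem _ _ (wb 1).2)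
      have : g 2 • (wb 0 : Fin 4 → ℂ) + g 3 • wb 1 ∈ W₁ ⊓ W₃ := ⟨hker, hmem3⟩
      rw [h13] at this; exact this
    have key : ∀ a b : ℂ, a • (wb 0 : Fin 4 → ℂ) + b • wb 1 = 0 → a = 0 ∧ b = 0 := by
      intro a b hab
      have hab' : a • wb 0 + b • wb 1 = (0 : W₃) := by
        apply Subtype.coe_injective
        push_cast
        exact hab
      have li := wb.linearIndependent
      rw [Fintype.linearIndependent_iff] at li
      have := li ![a, b] (by rw [Fin.sum_univ_two]; simpa using hab')
      exact ⟨this 0, this 1⟩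
    obtain ⟨e0, e1⟩ := key _ _ hv1
    obtain ⟨e2, e3⟩ := key _ _ hv2
    intro i; fin_cases i <;> assumption
  -- the basis
  have hBucard : Fintype.card (Fin 4) = Module.finrank ℂ (Fin 4 → ℂ) := by simp [hV]
  set Bu : Module.Basis (Fin 4) ℂ (Fin 4 → ℂ) := basisOfLinearIndependentOfCardEqFinrank hli hBucard
    with hBu
  have hBu_eq : ∀ a, Bu a = u a := fun a => by
    rw [hBu, coe_basisOfLinearIndependentOfCardEqFinrank]
  have hrepr_u : ∀ a, Bu.repr (u a) = Finsupp.single a 1 := fun a => by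
    rw [← hBu_eq, Bu.repr_self]
  -- span characterizations
  have hspan : ∀ (W : Submodule ℂ (Fin 4 → ℂ)) (a b : Fin 4), a ≠ b → u a ∈ W → u b ∈ W →
      Module.finrank ℂ W = 2 → ∀ x ∈ W, ∃ s t : ℂ, x = s • u a + t • u b := by
    intro W a b hab ha hb hrk x hx
    have hle : Submodule.span ℂ {u a, u b} ≤ W := by
      rw [Submodule.span_le]
      rintro y (rfl | rfl)
      · exact ha
      · exact hb
    have hinj : Function.Injective ![a, b] := by
      intro i j hij
      fin_cases i <;> fin_cases j <;>
        first
          | rfl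
          | (exfalso; exact hab (by simpa using hij))
          | (exfalso; exact hab (by simpa using hij.symm))
    have hli2 : LinearIndependent ℂ ![u a, u b] := by
      have hcomp : u ∘ ![a, b] = ![u a, u b] := by
        funext i; fin_cases i <;> rfl
      have := hli.comp ![a, b] hinj
      rwa [hcomp] at this
    have hrange : Set.range ![u a, u b] = {u a, u b} := by
      simp [Matrix.range_cons, Matrix.range_empty, Set.pair_comm]
    have hrk2 : Module.finrank ℂ (Submodule.span ℂ {u a, u b}) = 2 := by
      rw [← hrange, finrank_span_eq_card hli2]
      simp
    have heq : Submodule.span ℂ {u a, u b} = W :=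
      Submodule.eq_of_le_of_finrank_le hle (by rw [hrk, hrk2])
    rw [← heq] at hx
    obtain ⟨s, t, hst⟩ := Submodule.mem_span_pair.mp hx
    exact ⟨s, t, hst.symm⟩
  have hmemW1 : ∀ x ∈ W₁, ∃ s t : ℂ, x = s • u 0 + t • u 1 :=
    hspan W₁ 0 1 (by decide) hu0 hu1 h1
  have hmemW2 : ∀ x ∈ W₂, ∃ s t : ℂ, x = s • u 2 + t • u 3 :=
    hspan W₂ 2 3 (by decide) hu2 hu3 h2
  have hmemW3 : ∀ x ∈ W₃, ∃ s t : ℂ, x = s • (u 0 + u 2) + t • (u 1 + u 3) := by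
    intro x hx
    refine ⟨wb.repr ⟨x, hx⟩ 0, wb.repr ⟨x, hx⟩ 1, ?_⟩
    rw [hw0, hw1]
    have := wb.sum_repr ⟨x, hx⟩
    rw [Fin.sum_univ_two] at this
    have := congrArg (Subtype.val) this
    push_cast at this
    exact this.symm
  -- the coordinate polynomial construction
  set N : Fin 4 → Fin 4 → ℂ := fun i j => Bu.coord i (Pi.single j 1) with hN
  set L : Fin 4 → MvPolynomial (Fin 4) ℂ := fun i => ∑ j : Fin 4, C (N i j) * X j with hL
  have hsingle_sum : ∀ x : Fin 4 → ℂ, ∑ j : Fin 4, x j • (Pi.single j 1 : Fin 4 → ℂ) = x := by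
    intro x
    funext k
    rw [Finset.sum_apply]
    simp [Pi.single_apply]
  have heval_L : ∀ (x : Fin 4 → ℂ) (i : Fin 4), eval x (L i) = Bu.repr x i := by
    intro x i
    have hcx : Bu.repr x i = ∑ j : Fin 4, x j * N i j := by
      conv_lhs => rw [← hsingle_sum x]
      rw [← Bu.coord_apply, map_sum]
      simp [hN, Module.Basis.coord_apply, smul_eq_mul]
    rw [hL]
    simp only [map_sum, eval_mul, eval_C, eval_X]
    rw [hcx]
    exact Finset.sum_congr rfl (fun j _ => mul_comm _ _)
  set q : MvPolynomial (Fin 4) ℂ := L 0 * L 3 - L 1 * L 2 with hq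
  have heval_q : ∀ x : Fin 4 → ℂ,
      eval x q = Bu.repr x 0 * Bu.repr x 3 - Bu.repr x 1 * Bu.repr x 2 := by
    intro x
    rw [hq]
    simp [heval_L]
  have hLhom : ∀ i, (L i).IsHomogeneous 1 := by
    intro i
    rw [hL, ← mem_homogeneousSubmodule _ _]
    exact Submodule.sum_mem _ (fun j _ =>
      (mem_homogeneousSubmodule _ _).mpr ((isHomogeneous_X ℂ j).C_mul (N i j)))
  have hqhom : q.IsHomogeneous 2 := ((hLhom 0).mul (hLhom 3)).sub ((hLhom 1).mul (hLhom 2))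
  have hqne : q ≠ 0 := by
    intro h0
    have : eval (u 0 + u 3) q = 1 := by
      rw [heval_q]
      rw [map_add, hrepr_u, hrepr_u]
      simp [Finsupp.single_apply]
    rw [h0] at this
    simp at this
  -- vanishing of q on the three subspaces
  have hvan1 : ∀ w ∈ W₁, eval w q = 0 := by
    intro w hw
    obtain ⟨s, t, rfl⟩ := hmemW1 w hw
    rw [heval_q, map_add, map_smul, map_smul, hrepr_u, hrepr_u]
    simp [Finsupp.single_apply]
  have hvan2 : ∀ w ∈ W₂, eval w q = 0 := by
    intro w hw
    obtain ⟨s, t, rfl⟩ := hmemW2 w hw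
    rw [heval_q, map_add, map_smul, map_smul, hrepr_u, hrepr_u]
    simp [Finsupp.single_apply]
  have hvan3 : ∀ w ∈ W₃, eval w q = 0 := by
    intro w hw
    obtain ⟨s, t, rfl⟩ := hmemW3 w hw
    rw [heval_q]
    rw [map_add, map_smul, map_smul, map_add, map_add, hrepr_u, hrepr_u, hrepr_u, hrepr_u]
    simp [Finsupp.single_apply]
    ring
  -- smoothness
  have hsmooth : ∀ x : Fin 4 → ℂ, x ≠ 0 → eval x q = 0 →
      ∃ i : Fin 4, eval x (pderiv i q) ≠ 0 := by
    intro x hx _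
    by_contra hall
    push_neg at hall
    have hpdL : ∀ (i k : Fin 4), pderiv k (L i) = C (N i k) := by
      intro i k
      rw [hL]
      simp only [map_sum, pderiv_C_mul, pderiv_X]
      rw [Finset.sum_eq_single k]
      · simp
      · intro b _ hbk
        simp [Pi.single_apply, hbk, Ne.symm hbk]
      · simp
    have hpdq : ∀ k, eval x (pderiv k q) =
        N 0 k * Bu.repr x 3 + N 3 k * Bu.repr x 0
        - (N 1 k * Bu.repr x 2 + N 2 k * Bu.repr x 1) := by
      intro k
      rw [hq, map_sub, pderiv_mul, pderiv_mul, hpdL, hpdL, hpdL, hpdL]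
      simp [heval_L]
      ring
    set φ : (Fin 4 → ℂ) →ₗ[ℂ] ℂ :=
      (Bu.repr x 3) • Bu.coord 0 + (Bu.repr x 0) • Bu.coord 3
      - (Bu.repr x 2) • Bu.coord 1 - (Bu.repr x 1) • Bu.coord 2 with hφ
    have hφ_single : ∀ k, φ (Pi.single k 1) = 0 := by
      intro k
      have := hall k
      rw [hpdq k] at this
      rw [hφ]
      simp only [LinearMap.sub_apply, LinearMap.add_apply, LinearMap.smul_apply,
        Module.Basis.coord_apply, smul_eq_mul]
      simp only [hN, Module.Basis.coord_apply] at this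
      linear_combination this
    have hφ_zero : ∀ y, φ y = 0 := by
      intro y
      rw [← hsingle_sum y, map_sum]
      simp only [map_smul, hφ_single, smul_eq_mul, mul_zero, Finset.sum_const_zero]
    have hval : ∀ a, φ (u a) =
        (Bu.repr x 3) * (if (0:Fin 4) = a then 1 else 0)
        + (Bu.repr x 0) * (if (3:Fin 4) = a then 1 else 0)
        - (Bu.repr x 2) * (if (1:Fin 4) = a then 1 else 0)
        - (Bu.repr x 1) * (if (2:Fin 4) = a then 1 else 0) := by
      intro a
      rw [hφ]
      simp only [LinearMap.sub_apply, LinearMap.add_apply, LinearMap.smul_apply,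
        Module.Basis.coord_apply, hrepr_u, smul_eq_mul]
      simp [Finsupp.single_apply, eq_comm]
    have e0 : Bu.repr x 3 = 0 := by have := hφ_zero (u 0); rw [hval 0] at this; simpa using this
    have e3 : Bu.repr x 0 = 0 := by have := hφ_zero (u 3); rw [hval 3] at this; simpa using this
    have e1 : Bu.repr x 2 = 0 := by
      have := hφ_zero (u 1); rw [hval 1] at this; simpa using this
    have e2 : Bu.repr x 1 = 0 := by
      have := hφ_zero (u 2); rw [hval 2] at this; simpa using this
    apply hx
    have hrx : Bu.repr x = 0 := by
      ext i
      fin_cases i <;> simpa using by assumption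
    have := Bu.sum_repr x
    rw [hrx] at this
    simpa using this.symm
  refine ⟨q, hqne, hqhom, hvan1, hvan2, hvan3, hsmooth, ?_⟩
  -- uniqueness
  intro q' hq'ne hq'hom hz1 hz2 hz3
  set A : Matrix (Fin 4) (Fin 4) ℂ :=
    Matrix.of (fun i j => eval 0 (pderiv i (pderiv j q'))) with hA
  set Bl : (Fin 4 → ℂ) →ₗ[ℂ] (Fin 4 → ℂ) →ₗ[ℂ] ℂ := Matrix.toLinearMap₂' ℂ A with hBl
  have hBl_apply : ∀ v y : Fin 4 → ℂ,
      Bl v y = ∑ i : Fin 4, ∑ j : Fin 4, eval 0 (pderiv i (pderiv j q')) * v i * y j := by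
    intro v y
    rw [hBl, Matrix.toLinearMap₂'_apply]
    refine Finset.sum_congr rfl fun i _ => Finset.sum_congr rfl fun j _ => ?_
    simp only [smul_eq_mul, hA, Matrix.of_apply]
    ring
  have hquad : ∀ v, Bl v v = 2 * eval v q' := by
    intro v
    rw [hBl_apply]
    exact rep q' hq'hom v
  have hS : ∀ v y, Bl v y + Bl y v = 2 * (eval (v+y) q' - eval v q' - eval y q') := by
    intro v y
    have h4 : Bl (v+y) (v+y) = Bl v v + Bl v y + Bl y v + Bl y y := by
      simp only [map_add, LinearMap.add_apply]
      ring
    have h5 := hquad (v+y)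
    rw [h4, hquad v, hquad y] at h5
    linear_combination h5
  have hpair : ∀ (W : Submodule ℂ (Fin 4 → ℂ)), (∀ w ∈ W, eval w q' = 0) →
      ∀ v ∈ W, ∀ y ∈ W, Bl v y + Bl y v = 0 := by
    intro W hvan v hv y hy
    rw [hS, hvan _ (add_mem hv hy), hvan _ hv, hvan _ hy]
    ring
  have hm00 : Bl (u 0) (u 0) = 0 := by
    have h := hpair W₁ hz1 (u 0) hu0 (u 0) hu0
    linear_combination h / 2
  have hm11 : Bl (u 1) (u 1) = 0 := by
    have h := hpair W₁ hz1 (u 1) hu1 (u 1) hu1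
    linear_combination h / 2
  have hm22 : Bl (u 2) (u 2) = 0 := by
    have h := hpair W₂ hz2 (u 2) hu2 (u 2) hu2
    linear_combination h / 2
  have hm33 : Bl (u 3) (u 3) = 0 := by
    have h := hpair W₂ hz2 (u 3) hu3 (u 3) hu3
    linear_combination h / 2
  have h01 : Bl (u 0) (u 1) + Bl (u 1) (u 0) = 0 := hpair W₁ hz1 _ hu0 _ hu1
  have h23p : Bl (u 2) (u 3) + Bl (u 3) (u 2) = 0 := hpair W₂ hz2 _ hu2 _ hu3
  have hw0m : (u 0 + u 2) ∈ W₃ := by rw [hw0]; exact (wb 0).2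
  have hw1m : (u 1 + u 3) ∈ W₃ := by rw [hw1]; exact (wb 1).2
  have h02 : Bl (u 0) (u 2) + Bl (u 2) (u 0) = 0 := by
    have h := hpair W₃ hz3 _ hw0m _ hw0m
    simp only [map_add, LinearMap.add_apply] at h
    linear_combination (h - 2 * hm00 - 2 * hm22) / 2
  have h13 : Bl (u 1) (u 3) + Bl (u 3) (u 1) = 0 := by
    have h := hpair W₃ hz3 _ hw1m _ hw1m
    simp only [map_add, LinearMap.add_apply] at h
    linear_combination (h - 2 * hm11 - 2 * hm33) / 2
  have hcross : (Bl (u 0) (u 3) + Bl (u 3) (u 0)) + (Bl (u 1) (u 2) + Bl (u 2) (u 1)) = 0 := by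
    have h := hpair W₃ hz3 _ hw0m _ hw1m
    simp only [map_add, LinearMap.add_apply] at h
    linear_combination h - h01 - h23p
  have hexpand : ∀ v : Fin 4 → ℂ,
      Bl v v = ∑ a : Fin 4, ∑ b : Fin 4, Bu.repr v a * Bu.repr v b * Bl (u a) (u b) := by
    intro v
    conv_lhs => rw [← Bu.sum_repr v]
    simp only [map_sum, map_smul, LinearMap.sum_apply, LinearMap.smul_apply, smul_eq_mul, hBu_eq]
    simp only [Finset.mul_sum]
    rw [Finset.sum_comm]
    exact Finset.sum_congr rfl fun a _ => Finset.sum_congr rfl fun b _ => by ring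
  have hkey : ∀ v : Fin 4 → ℂ,
      2 * eval v q' = (Bl (u 0) (u 3) + Bl (u 3) (u 0)) * eval v q := by
    intro v
    rw [heval_q, ← hquad v, hexpand v]
    rw [Fin.sum_univ_four]
    simp only [Fin.sum_univ_four]
    linear_combination (Bu.repr v 0)^2 * hm00 + (Bu.repr v 1)^2 * hm11
      + (Bu.repr v 2)^2 * hm22 + (Bu.repr v 3)^2 * hm33
      + (Bu.repr v 0 * Bu.repr v 1) * h01 + (Bu.repr v 0 * Bu.repr v 2) * h02
      + (Bu.repr v 1 * Bu.repr v 3) * h13 + (Bu.repr v 2 * Bu.repr v 3) * h23p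
      + (Bu.repr v 1 * Bu.repr v 2) * hcross
  have hc2ne : (Bl (u 0) (u 3) + Bl (u 3) (u 0)) ≠ 0 := by
    intro hc0
    apply hq'ne
    apply MvPolynomial.funext
    intro v
    rw [map_zero]
    have h := hkey v
    rw [hc0, zero_mul] at h
    linear_combination h / 2
  ext v
  simp only [Set.mem_setOf_eq]
  constructor
  · intro h
    have hk := hkey v
    rw [h, mul_zero] at hk
    rcases mul_eq_zero.mp hk.symm with h' | h'
    · exact absurd h' hc2ne
    · exact h'
  · intro h
    have hk := hkey v
    rw [h, mul_zero] at hk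
    linear_combination hk / 2
end

section
/- Let L₁,…,L_k be lines in P^3. They have infinitely many common transversals if and only if they have at least three distinct common transversals. -/
open Submodule Module

private lemma finrank_span_pair {x y : Fin 4 → ℂ}
    (h : ∀ s t : ℂ, s • x + t • y = 0 → s = 0 ∧ t = 0) :
    Module.finrank ℂ (Submodule.span ℂ {x, y} : Submodule ℂ (Fin 4 → ℂ)) = 2 := by
  have hli : LinearIndependent ℂ ![x, y] := LinearIndependent.pair_iff.2 h
  have h2 := finrank_span_eq_card (R := ℂ) hli
  have hs : Set.range ![x, y] = {x, y} := by
    simp [Matrix.range_cons, Matrix.range_empty, Set.pair_comm]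
  rw [hs] at h2
  simpa using h2

private lemma eq_span_pair {W : Submodule ℂ (Fin 4 → ℂ)} (hW : finrank ℂ W = 2)
    {x y : Fin 4 → ℂ} (hx : x ∈ W) (hy : y ∈ W)
    (h : ∀ s t : ℂ, s • x + t • y = 0 → s = 0 ∧ t = 0) :
    W = Submodule.span ℂ {x, y} := by
  refine (Submodule.eq_of_le_of_finrank_le (Submodule.span_le.2 ?_) ?_).symm
  · rintro z (rfl | rfl) <;> assumption
  · rw [hW, finrank_span_pair h]

private lemma inf_ne_bot {W L : Submodule ℂ (Fin 4 → ℂ)} {v : Fin 4 → ℂ} (hv : v ≠ 0)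
    (h1 : v ∈ W) (h2 : v ∈ L) : W ⊓ L ≠ ⊥ :=
  (Submodule.ne_bot_iff _).2 ⟨v, ⟨h1, h2⟩, hv⟩

private lemma case1 {k : ℕ} (L : Fin k → Submodule ℂ (Fin 4 → ℂ))
    (hL : ∀ i, finrank ℂ (L i) = 2)
    {O O' : Submodule ℂ (Fin 4 → ℂ)}
    (hO2 : finrank ℂ O = 2) (hOt : ∀ i, O ⊓ L i ≠ ⊥)
    (hO'2 : finrank ℂ O' = 2) (hO't : ∀ i, O' ⊓ L i ≠ ⊥)
    (hne : O ≠ O') (hmeet : O ⊓ O' ≠ ⊥) :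
    {W : Submodule ℂ (Fin 4 → ℂ) |
        Module.finrank ℂ W = 2 ∧ ∀ i, W ⊓ L i ≠ ⊥}.Infinite := by
  obtain ⟨p, hpm, hp0⟩ := (Submodule.ne_bot_iff _).1 hmeet
  obtain ⟨hpO, hpO'⟩ := Submodule.mem_inf.1 hpm
  -- finrank (O ⊓ O') = 1
  have hinfle : finrank ℂ (O ⊓ O' : Submodule ℂ (Fin 4 → ℂ)) ≤ 2 :=
    (Submodule.finrank_mono inf_le_left).trans_eq hO2
  have hinfge : 1 ≤ finrank ℂ (O ⊓ O' : Submodule ℂ (Fin 4 → ℂ)) := by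
    have h1 : Submodule.span ℂ {p} ≤ O ⊓ O' := by
      rw [Submodule.span_le]; rintro z rfl; exact hpm
    have := Submodule.finrank_mono (s := Submodule.span ℂ {p}) (t := O ⊓ O') h1
    rwa [finrank_span_singleton hp0] at this
  have hinfne : finrank ℂ (O ⊓ O' : Submodule ℂ (Fin 4 → ℂ)) ≠ 2 := by
    intro h
    have e1 : O ⊓ O' = O :=
      Submodule.eq_of_le_of_finrank_le inf_le_left (by rw [hO2, h])
    have e2 : O ⊓ O' = O' :=
      Submodule.eq_of_le_of_finrank_le inf_le_right (by rw [hO'2, h])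
    exact hne (e1 ▸ e2)
  have hinf1 : finrank ℂ (O ⊓ O' : Submodule ℂ (Fin 4 → ℂ)) = 1 := by omega
  have hspanp : O ⊓ O' = Submodule.span ℂ {p} := by
    refine (Submodule.eq_of_le_of_finrank_le ?_ ?_).symm
    · rw [Submodule.span_le]; rintro z rfl; exact hpm
    · rw [hinf1, finrank_span_singleton hp0]
  -- H = O ⊔ O' has finrank 3
  have hH3 : finrank ℂ (O ⊔ O' : Submodule ℂ (Fin 4 → ℂ)) = 3 := by
    have := Submodule.finrank_sup_add_finrank_inf_eq O O'
    omega
  -- choose q ∈ O \ span p, r ∈ O' \ span p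
  have hq : ∃ q ∈ O, q ∉ Submodule.span ℂ {p} := by
    by_contra h
    push_neg at h
    have hle : O ≤ Submodule.span ℂ {p} := h
    have := Submodule.finrank_mono hle
    rw [hO2, finrank_span_singleton hp0] at this
    omega
  obtain ⟨q, hqO, hqp⟩ := hq
  have hr : ∃ r ∈ O', r ∉ Submodule.span ℂ {p} := by
    by_contra h
    push_neg at h
    have hle : O' ≤ Submodule.span ℂ {p} := h
    have := Submodule.finrank_mono hle
    rw [hO'2, finrank_span_singleton hp0] at this
    omega
  obtain ⟨r, hrO', hrp⟩ := hr
  -- triple independence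
  have hind : ∀ a b c : ℂ, a • p + b • q + c • r = 0 → a = 0 ∧ b = 0 ∧ c = 0 := by
    intro a b c h
    have hcr : c • r ∈ Submodule.span ℂ {p} := by
      rw [← hspanp]
      refine Submodule.mem_inf.2 ⟨?_, Submodule.smul_mem _ _ hrO'⟩
      have : c • r = -(a • p + b • q) := by linear_combination (norm := module) h
      rw [this]
      exact Submodule.neg_mem _ (Submodule.add_mem _ (Submodule.smul_mem _ _ hpO)
        (Submodule.smul_mem _ _ hqO))
    have hc : c = 0 := by
      by_contra hc
      exact hrp (by
        have : r = c⁻¹ • (c • r) := by rw [smul_smul, inv_mul_cancel₀ hc, one_smul]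
        rw [this]; exact Submodule.smul_mem _ _ hcr)
    subst hc
    have h' : a • p + b • q = 0 := by linear_combination (norm := module) h
    have hb : b = 0 := by
      by_contra hb
      refine hqp ?_
      have h2 : b • q = (-a) • p := by linear_combination (norm := module) h'
      have : q = (b⁻¹ * -a) • p := by
        rw [← smul_smul, ← h2, smul_smul, inv_mul_cancel₀ hb, one_smul]
      rw [this]
      exact Submodule.smul_mem _ _ (Submodule.mem_span_singleton_self p)
    subst hb
    have ha : a • p = 0 := by linear_combination (norm := module) h'
    rcases smul_eq_zero.1 ha with h | h
    · exact ⟨h, rfl, rfl⟩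
    · exact absurd h hp0
  -- dichotomy
  have hdich : ∀ i, p ∈ L i ∨ L i ≤ O ⊔ O' := by
    intro i
    obtain ⟨a, ham, ha0⟩ := (Submodule.ne_bot_iff _).1 (hOt i)
    obtain ⟨haO, haL⟩ := Submodule.mem_inf.1 ham
    obtain ⟨b, hbm, hb0⟩ := (Submodule.ne_bot_iff _).1 (hO't i)
    obtain ⟨hbO', hbL⟩ := Submodule.mem_inf.1 hbm
    by_cases hab : ∀ s t : ℂ, s • a + t • b = 0 → s = 0 ∧ t = 0
    · right
      rw [eq_span_pair (hL i) haL hbL hab, Submodule.span_le]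
      rintro z (rfl | rfl)
      · exact Submodule.mem_sup_left haO
      · exact Submodule.mem_sup_right hbO'
    · left
      push_neg at hab
      obtain ⟨s, t, hst, hne0⟩ := hab
      have ht : t ≠ 0 := by
        intro ht
        subst ht
        have hs : s ≠ 0 := by
          intro hs; exact hne0 hs (by rfl)
        have : s • a = 0 := by linear_combination (norm := module) hst
        rcases smul_eq_zero.1 this with h | h
        · exact hs h
        · exact ha0 h
      have h2 : t • b = (-s) • a := by linear_combination (norm := module) hst
      have hba : b = (t⁻¹ * -s) • a := by
        rw [← smul_smul, ← h2, smul_smul, inv_mul_cancel₀ ht, one_smul]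
      have hbO : b ∈ O := hba ▸ Submodule.smul_mem _ _ haO
      have hbsp : b ∈ Submodule.span ℂ {p} := by
        rw [← hspanp]; exact Submodule.mem_inf.2 ⟨hbO, hbO'⟩
      obtain ⟨d, hd⟩ := Submodule.mem_span_singleton.1 hbsp
      have hd0 : d ≠ 0 := by
        intro h; subst h; simp at hd; exact hb0 hd.symm
      have : p = d⁻¹ • b := by
        rw [← hd, smul_smul, inv_mul_cancel₀ hd0, one_smul]
      rw [this]
      exact Submodule.smul_mem _ _ hbL
  -- the pencil
  set f : ℂ → Submodule ℂ (Fin 4 → ℂ) := fun t => Submodule.span ℂ {p, q + t • r} with hf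
  have hpair : ∀ t : ℂ, ∀ s u : ℂ, s • p + u • (q + t • r) = 0 → s = 0 ∧ u = 0 := by
    intro t s u h
    have := hind s u (u * t) (by linear_combination (norm := module) h)
    exact ⟨this.1, this.2.1⟩
  have hf2 : ∀ t, finrank ℂ (f t) = 2 := fun t => finrank_span_pair (hpair t)
  have hfH : ∀ t, f t ≤ O ⊔ O' := by
    intro t
    rw [hf, Submodule.span_le]
    rintro z (rfl | rfl)
    · exact Submodule.mem_sup_left hpO
    · exact Submodule.add_mem _ (Submodule.mem_sup_left hqO)
        (Submodule.smul_mem _ _ (Submodule.mem_sup_right hrO'))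
  have hmem : ∀ t, f t ∈ {W : Submodule ℂ (Fin 4 → ℂ) |
      Module.finrank ℂ W = 2 ∧ ∀ i, W ⊓ L i ≠ ⊥} := by
    intro t
    refine ⟨hf2 t, fun i => ?_⟩
    rcases hdich i with h | h
    · exact inf_ne_bot hp0 (Submodule.subset_span (Set.mem_insert _ _)) h
    · have hsup : finrank ℂ (f t ⊔ L i : Submodule ℂ (Fin 4 → ℂ)) ≤ 3 := by
        have := Submodule.finrank_mono (sup_le (hfH t) h)
        omega
      have key := Submodule.finrank_sup_add_finrank_inf_eq (f t) (L i)
      rw [hf2 t, hL i] at key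
      intro hbot
      rw [hbot] at key
      simp at key
      omega
  have hinj : Function.Injective f := by
    intro t s h
    have hmem2 : q + t • r ∈ f s := by
      rw [← h]; exact Submodule.subset_span (Set.mem_insert_of_mem _ rfl)
    rw [hf] at hmem2
    obtain ⟨α, β, hs'⟩ := Submodule.mem_span_pair.1 hmem2
    have := hind α (β - 1) (β * s - t) (by linear_combination (norm := module) hs')
    have hb1 : β = 1 := sub_eq_zero.1 this.2.1
    have hts := this.2.2
    rw [hb1, one_mul] at hts
    exact (sub_eq_zero.1 hts).symm
  exact Set.infinite_of_injective_forall_mem hinj hmem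

private lemma span_pair_smul {u v : Fin 4 → ℂ} {α β : ℂ} (hα : α ≠ 0) (hβ : β ≠ 0) :
    Submodule.span ℂ {α • u, β • v} = Submodule.span ℂ ({u, v} : Set (Fin 4 → ℂ)) := by
  apply le_antisymm <;> rw [Submodule.span_le] <;> rintro z (rfl | rfl)
  · exact Submodule.smul_mem _ _ (Submodule.subset_span (Set.mem_insert _ _))
  · exact Submodule.smul_mem _ _ (Submodule.subset_span (Set.mem_insert_of_mem _ rfl))
  · exact Submodule.mem_span_pair.2 ⟨α⁻¹, 0, by
      simp [smul_smul, inv_mul_cancel₀ hα]⟩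
  · exact Submodule.mem_span_pair.2 ⟨0, β⁻¹, by
      simp [smul_smul, inv_mul_cancel₀ hβ]⟩

private lemma case2 {k : ℕ} (L : Fin k → Submodule ℂ (Fin 4 → ℂ))
    (hL : ∀ i, finrank ℂ (L i) = 2)
    {O₁ O₂ O₃ : Submodule ℂ (Fin 4 → ℂ)}
    (h₁2 : finrank ℂ O₁ = 2) (h₁t : ∀ i, O₁ ⊓ L i ≠ ⊥)
    (h₂2 : finrank ℂ O₂ = 2) (h₂t : ∀ i, O₂ ⊓ L i ≠ ⊥)
    (h₃2 : finrank ℂ O₃ = 2) (h₃t : ∀ i, O₃ ⊓ L i ≠ ⊥)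
    (h12 : O₁ ⊓ O₂ = ⊥) (h13 : O₁ ⊓ O₃ = ⊥) (h23 : O₂ ⊓ O₃ = ⊥) :
    {W : Submodule ℂ (Fin 4 → ℂ) |
        Module.finrank ℂ W = 2 ∧ ∀ i, W ⊓ L i ≠ ⊥}.Infinite := by
  have htop : O₁ ⊔ O₂ = ⊤ := by
    apply Submodule.eq_top_of_finrank_eq
    have key := Submodule.finrank_sup_add_finrank_inf_eq O₁ O₂
    rw [h12, finrank_bot] at key
    have h4 : finrank ℂ (Fin 4 → ℂ) = 4 := by simp
    omega
  have hO₃ne : O₃ ≠ ⊥ := by intro h; rw [h] at h₃2; simp at h₃2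
  obtain ⟨f₁, hf₁O, hf₁0⟩ := (Submodule.ne_bot_iff _).1 hO₃ne
  have hf₂ex : ∃ f₂ ∈ O₃, f₂ ∉ Submodule.span ℂ {f₁} := by
    by_contra h; push_neg at h
    have hle : O₃ ≤ Submodule.span ℂ {f₁} := h
    have := Submodule.finrank_mono hle
    rw [h₃2, finrank_span_singleton hf₁0] at this; omega
  obtain ⟨f₂, hf₂O, hf₂sp⟩ := hf₂ex
  have hfpair : ∀ s t : ℂ, s • f₁ + t • f₂ = 0 → s = 0 ∧ t = 0 := by
    intro s t h
    have ht : t = 0 := by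
      by_contra ht
      refine hf₂sp ?_
      have h2 : t • f₂ = (-s) • f₁ := by linear_combination (norm := module) h
      have : f₂ = (t⁻¹ * -s) • f₁ := by
        rw [← smul_smul, ← h2, smul_smul, inv_mul_cancel₀ ht, one_smul]
      rw [this]
      exact Submodule.smul_mem _ _ (Submodule.mem_span_singleton_self f₁)
    subst ht
    have h' : s • f₁ = 0 := by linear_combination (norm := module) h
    rcases smul_eq_zero.1 h' with h'' | h''
    · exact ⟨h'', rfl⟩
    · exact absurd h'' hf₁0
  have hO₃span : O₃ = Submodule.span ℂ {f₁, f₂} := eq_span_pair h₃2 hf₁O hf₂O hfpair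
  have hm1 : f₁ ∈ O₁ ⊔ O₂ := by rw [htop]; exact Submodule.mem_top
  obtain ⟨e1, he1, e3, he3, hs1⟩ := Submodule.mem_sup.1 hm1
  have hm2 : f₂ ∈ O₁ ⊔ O₂ := by rw [htop]; exact Submodule.mem_top
  obtain ⟨e2, he2, e4, he4, hs2⟩ := Submodule.mem_sup.1 hm2
  -- quadruple independence
  have hq : ∀ a b c d : ℂ, a • e1 + b • e2 + c • e3 + d • e4 = 0 →
      a = 0 ∧ b = 0 ∧ c = 0 ∧ d = 0 := by
    intro a b c d h
    have hx : a • e1 + b • e2 ∈ O₁ := add_mem (Submodule.smul_mem _ _ he1) (Submodule.smul_mem _ _ he2)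
    have hx2 : a • e1 + b • e2 ∈ O₂ := by
      have heq : a • e1 + b • e2 = -(c • e3 + d • e4) := by
        linear_combination (norm := module) h
      rw [heq]
      exact neg_mem (add_mem (Submodule.smul_mem _ _ he3) (Submodule.smul_mem _ _ he4))
    have hx0 : a • e1 + b • e2 = 0 := by
      have hmem : a • e1 + b • e2 ∈ O₁ ⊓ O₂ := Submodule.mem_inf.2 ⟨hx, hx2⟩
      rw [h12] at hmem; simpa using hmem
    have hy0 : c • e3 + d • e4 = 0 := by linear_combination (norm := module) h - hx0
    have hzO₂ : a • f₁ + b • f₂ ∈ O₂ := by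
      have hzeq : a • f₁ + b • f₂ = a • e3 + b • e4 := by
        linear_combination (norm := module) (-a) • hs1 + (-b) • hs2 + hx0
      rw [hzeq]
      exact add_mem (Submodule.smul_mem _ _ he3) (Submodule.smul_mem _ _ he4)
    have hz0 : a • f₁ + b • f₂ = 0 := by
      have hmem : a • f₁ + b • f₂ ∈ O₂ ⊓ O₃ := Submodule.mem_inf.2
        ⟨hzO₂, add_mem (Submodule.smul_mem _ _ hf₁O) (Submodule.smul_mem _ _ hf₂O)⟩
      rw [h23] at hmem; simpa using hmem
    obtain ⟨ha, hb⟩ := hfpair a b hz0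
    have hwO₁ : c • f₁ + d • f₂ ∈ O₁ := by
      have hweq : c • f₁ + d • f₂ = c • e1 + d • e2 := by
        linear_combination (norm := module) (-c) • hs1 + (-d) • hs2 + hy0
      rw [hweq]
      exact add_mem (Submodule.smul_mem _ _ he1) (Submodule.smul_mem _ _ he2)
    have hw0 : c • f₁ + d • f₂ = 0 := by
      have hmem : c • f₁ + d • f₂ ∈ O₁ ⊓ O₃ := Submodule.mem_inf.2
        ⟨hwO₁, add_mem (Submodule.smul_mem _ _ hf₁O) (Submodule.smul_mem _ _ hf₂O)⟩
      rw [h13] at hmem; simpa using hmem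
    obtain ⟨hc, hd⟩ := hfpair c d hw0
    exact ⟨ha, hb, hc, hd⟩
  have hO₁span : O₁ = Submodule.span ℂ {e1, e2} :=
    eq_span_pair h₁2 he1 he2 (fun s t h => by
      have := hq s t 0 0 (by linear_combination (norm := module) h)
      exact ⟨this.1, this.2.1⟩)
  have hO₂span : O₂ = Submodule.span ℂ {e3, e4} :=
    eq_span_pair h₂2 he3 he4 (fun s t h => by
      have := hq 0 0 s t (by linear_combination (norm := module) h)
      exact ⟨this.2.2.1, this.2.2.2⟩)
  -- classification of the L i
  have hclass : ∀ i, ∃ s t : ℂ, ¬(s = 0 ∧ t = 0) ∧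
      L i = Submodule.span ℂ {s • e1 + t • e2, s • e3 + t • e4} := by
    intro i
    obtain ⟨u, hum, hu0⟩ := (Submodule.ne_bot_iff _).1 (h₁t i)
    obtain ⟨huO, huL⟩ := Submodule.mem_inf.1 hum
    obtain ⟨v, hvm, hv0⟩ := (Submodule.ne_bot_iff _).1 (h₂t i)
    obtain ⟨hvO, hvL⟩ := Submodule.mem_inf.1 hvm
    obtain ⟨w, hwm, hw0⟩ := (Submodule.ne_bot_iff _).1 (h₃t i)
    obtain ⟨hwO, hwL⟩ := Submodule.mem_inf.1 hwm
    rw [hO₁span] at huO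
    rw [hO₂span] at hvO
    rw [hO₃span] at hwO
    obtain ⟨a, b, hu⟩ := Submodule.mem_span_pair.1 huO
    obtain ⟨c, d, hv⟩ := Submodule.mem_span_pair.1 hvO
    obtain ⟨s, t, hw⟩ := Submodule.mem_span_pair.1 hwO
    have huv : ∀ α β : ℂ, α • u + β • v = 0 → α = 0 ∧ β = 0 := by
      intro α β h
      have hcoef := hq (α*a) (α*b) (β*c) (β*d)
        (by linear_combination (norm := module) α • hu + β • hv + h)
      constructor
      · by_contra hα
        apply hu0
        have ha : a = 0 := by
          rcases mul_eq_zero.1 hcoef.1 with h'|h'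
          · exact absurd h' hα
          · exact h'
        have hb : b = 0 := by
          rcases mul_eq_zero.1 hcoef.2.1 with h'|h'
          · exact absurd h' hα
          · exact h'
        rw [← hu, ha, hb]; simp
      · by_contra hβ
        apply hv0
        have hc : c = 0 := by
          rcases mul_eq_zero.1 hcoef.2.2.1 with h'|h'
          · exact absurd h' hβ
          · exact h'
        have hd : d = 0 := by
          rcases mul_eq_zero.1 hcoef.2.2.2 with h'|h'
          · exact absurd h' hβ
          · exact h'
        rw [← hv, hc, hd]; simp
    have hLi : L i = Submodule.span ℂ {u, v} := eq_span_pair (hL i) huL hvL huv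
    have hwL' : w ∈ Submodule.span ℂ ({u, v} : Set (Fin 4 → ℂ)) := by rw [← hLi]; exact hwL
    obtain ⟨α, β, hαβ⟩ := Submodule.mem_span_pair.1 hwL'
    have hmatch := hq (α*a - s) (α*b - t) (β*c - s) (β*d - t)
      (by linear_combination (norm := module) α • hu + β • hv + (-s) • hs1 + (-t) • hs2 - hw + hαβ)
    have hst : ¬(s = 0 ∧ t = 0) := by
      rintro ⟨rfl, rfl⟩
      apply hw0
      rw [← hw]; simp
    have hα0 : α ≠ 0 := by
      rintro rfl
      apply hst
      constructor
      · have h1 := hmatch.1; rw [zero_mul, zero_sub, neg_eq_zero] at h1; exact h1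
      · have h1 := hmatch.2.1; rw [zero_mul, zero_sub, neg_eq_zero] at h1; exact h1
    have hβ0 : β ≠ 0 := by
      rintro rfl
      apply hst
      constructor
      · have h1 := hmatch.2.2.1; rw [zero_mul, zero_sub, neg_eq_zero] at h1; exact h1
      · have h1 := hmatch.2.2.2; rw [zero_mul, zero_sub, neg_eq_zero] at h1; exact h1
    refine ⟨s, t, hst, ?_⟩
    have hsa : α * a = s := sub_eq_zero.1 hmatch.1
    have htb : α * b = t := sub_eq_zero.1 hmatch.2.1
    have hsc : β * c = s := sub_eq_zero.1 hmatch.2.2.1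
    have htd : β * d = t := sub_eq_zero.1 hmatch.2.2.2
    have hαu : α • u = s • e1 + t • e2 := by
      rw [← hsa, ← htb]
      linear_combination (norm := module) (-α) • hu
    have hβv : β • v = s • e3 + t • e4 := by
      rw [← hsc, ← htd]
      linear_combination (norm := module) (-β) • hv
    rw [hLi, ← hαu, ← hβv, span_pair_smul hα0 hβ0]
  -- the opposite ruling
  have hg : ∀ r s t : ℂ, s • (e1 + r • e3) + t • (e2 + r • e4) = 0 → s = 0 ∧ t = 0 := by
    intro r s t h
    have := hq s t (s*r) (t*r) (by linear_combination (norm := module) h)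
    exact ⟨this.1, this.2.1⟩
  have hmem : ∀ r : ℂ, Submodule.span ℂ {e1 + r • e3, e2 + r • e4} ∈
      {W : Submodule ℂ (Fin 4 → ℂ) | Module.finrank ℂ W = 2 ∧ ∀ i, W ⊓ L i ≠ ⊥} := by
    intro r
    refine ⟨finrank_span_pair (hg r), fun i => ?_⟩
    obtain ⟨s, t, hst, hLi⟩ := hclass i
    refine inf_ne_bot (v := s • (e1 + r • e3) + t • (e2 + r • e4)) ?_ ?_ ?_
    · intro h; exact hst ⟨(hg r s t h).1, (hg r s t h).2⟩
    · exact Submodule.mem_span_pair.2 ⟨s, t, rfl⟩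
    · rw [hLi]
      exact Submodule.mem_span_pair.2 ⟨1, r, by module⟩
  have hinj : Function.Injective
      (fun r : ℂ => Submodule.span ℂ {e1 + r • e3, e2 + r • e4}) := by
    intro r r' h
    have h2 : Submodule.span ℂ ({e1 + r • e3, e2 + r • e4} : Set (Fin 4 → ℂ)) =
        Submodule.span ℂ ({e1 + r' • e3, e2 + r' • e4} : Set (Fin 4 → ℂ)) := h
    have hmem2 : e1 + r • e3 ∈ Submodule.span ℂ ({e1 + r' • e3, e2 + r' • e4} : Set (Fin 4 → ℂ)) := by
      rw [← h2]; exact Submodule.subset_span (Set.mem_insert _ _)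
    obtain ⟨α, β, hs'⟩ := Submodule.mem_span_pair.1 hmem2
    have hcoef := hq (α - 1) β (α * r' - r) (β * r')
      (by linear_combination (norm := module) hs')
    have h1 : α = 1 := sub_eq_zero.1 hcoef.1
    have h2 := hcoef.2.2.1
    rw [h1, one_mul] at h2
    exact (sub_eq_zero.1 h2).symm
  exact Set.infinite_of_injective_forall_mem hinj hmem


/-- Lines L₁,…,L_k in ℙ³ have infinitely many common transversals if and
only if they have at least three distinct common transversals.

Lines are 2-dimensional linear subspaces of ℂ⁴; a common transversal is a line meeting
each L_i, i.e. a 2-dimensional subspace intersecting each L_i nontrivially. -/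
theorem stmt_13 (k : ℕ) (L : Fin k → Submodule ℂ (Fin 4 → ℂ))
    (hL : ∀ i, Module.finrank ℂ (L i) = 2) :
    {W : Submodule ℂ (Fin 4 → ℂ) |
        Module.finrank ℂ W = 2 ∧ ∀ i, W ⊓ L i ≠ ⊥}.Infinite
      ↔ ∃ O₁ O₂ O₃ : Submodule ℂ (Fin 4 → ℂ),
          O₁ ∈ {W : Submodule ℂ (Fin 4 → ℂ) |
                  Module.finrank ℂ W = 2 ∧ ∀ i, W ⊓ L i ≠ ⊥} ∧
          O₂ ∈ {W : Submodule ℂ (Fin 4 → ℂ) |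
                  Module.finrank ℂ W = 2 ∧ ∀ i, W ⊓ L i ≠ ⊥} ∧
          O₃ ∈ {W : Submodule ℂ (Fin 4 → ℂ) |
                  Module.finrank ℂ W = 2 ∧ ∀ i, W ⊓ L i ≠ ⊥} ∧
          O₁ ≠ O₂ ∧ O₁ ≠ O₃ ∧ O₂ ≠ O₃ := by
  constructor
  · intro h
    classical
    obtain ⟨t, hts, hcard⟩ := h.exists_subset_card_eq 3
    rw [Finset.card_eq_three] at hcard
    obtain ⟨a, b, c, hab, hac, hbc, hteq⟩ := hcard
    rw [hteq] at hts
    exact ⟨a, b, c, hts (by simp), hts (by simp), hts (by simp), hab, hac, hbc⟩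
  · rintro ⟨O₁, O₂, O₃, ⟨h₁2, h₁t⟩, ⟨h₂2, h₂t⟩, ⟨h₃2, h₃t⟩, h12, h13, h23⟩
    by_cases e12 : O₁ ⊓ O₂ = ⊥
    · by_cases e13 : O₁ ⊓ O₃ = ⊥
      · by_cases e23 : O₂ ⊓ O₃ = ⊥
        · exact case2 L hL h₁2 h₁t h₂2 h₂t h₃2 h₃t e12 e13 e23
        · exact case1 L hL h₂2 h₂t h₃2 h₃t h23 e23
      · exact case1 L hL h₁2 h₁t h₃2 h₃t h13 e13
    · exact case1 L hL h₁2 h₁t h₂2 h₂t h12 e12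
end

section
/- If L₁, L₂, L₃, L₄ are four pairwise disjoint lines in P^3 that do not all lie on a common quadric surface, then they have at most two common transversals. -/
open Submodule Module MvPolynomial

lemma aux_poly (φ ψ φ' ψ' : (Fin 4 → ℂ) →ₗ[ℂ] ℂ) :
    ∃ q : MvPolynomial (Fin 4) ℂ, q.IsHomogeneous 2 ∧
      ∀ w : Fin 4 → ℂ, MvPolynomial.eval w q = φ w * ψ w - φ' w * ψ' w := by
  classical
  set e : Fin 4 → (Fin 4 → ℂ) := fun i j => if i = j then 1 else 0 with he
  refine ⟨∑ i : Fin 4, ∑ j : Fin 4,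
      MvPolynomial.C (φ (e i) * ψ (e j) - φ' (e i) * ψ' (e j)) * (X i * X j), ?_, ?_⟩
  · apply MvPolynomial.IsHomogeneous.sum
    intro i _
    apply MvPolynomial.IsHomogeneous.sum
    intro j _
    have h1 : ((MvPolynomial.C (φ (e i) * ψ (e j) - φ' (e i) * ψ' (e j)) :
        MvPolynomial (Fin 4) ℂ) * (X i * X j)).IsHomogeneous (0 + (1 + 1)) :=
      (MvPolynomial.isHomogeneous_C _ _).mul
        ((MvPolynomial.isHomogeneous_X ℂ i).mul (MvPolynomial.isHomogeneous_X ℂ j))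
    exact h1
  · intro w
    have hrep : ∀ l : (Fin 4 → ℂ) →ₗ[ℂ] ℂ, l w = ∑ i : Fin 4, w i * l (e i) := by
      intro l
      simpa [smul_eq_mul, he] using l.pi_apply_eq_sum_univ w
    simp only [map_sum, map_mul, eval_C, eval_X]
    rw [hrep φ, hrep ψ, hrep φ', hrep ψ', Finset.sum_mul_sum, Finset.sum_mul_sum,
      ← Finset.sum_sub_distrib]
    apply Finset.sum_congr rfl
    intro i _
    rw [← Finset.sum_sub_distrib]
    apply Finset.sum_congr rfl
    intro j _
    ring

lemma aux_finrank_span_pair {M : Type*} [AddCommGroup M] [Module ℂ M]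
    {v w : M} (h : ∀ a b : ℂ, a • v + b • w = 0 → a = 0 ∧ b = 0) :
    Module.finrank ℂ (span ℂ ({v, w} : Set M)) = 2 := by
  have hi : LinearIndependent ℂ ![v, w] :=
    LinearIndependent.pair_iff.mpr fun s t hst => h s t hst
  have hr : Set.range ![v, w] = {v, w} := by
    ext x
    simp [Matrix.range_cons, Matrix.range_empty, or_comm]
  have := finrank_span_eq_card hi
  rw [hr] at this
  simpa using this

lemma aux_iscompl {p q : Submodule ℂ (Fin 4 → ℂ)} (hp : Module.finrank ℂ p = 2)
    (hq : Module.finrank ℂ q = 2) (h : p ⊓ q = ⊥) : IsCompl p q := by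
  constructor
  · exact disjoint_iff.mpr h
  · rw [codisjoint_iff]
    apply Submodule.eq_top_of_finrank_eq
    have h4 : Module.finrank ℂ (Fin 4 → ℂ) = 4 := by simp
    have h5 := Submodule.finrank_sup_add_finrank_inf_eq p q
    rw [h, hp, hq] at h5
    simp only [finrank_bot, add_zero] at h5
    rw [h4, h5]

lemma aux_span_pair_smul {M : Type*} [AddCommGroup M] [Module ℂ M]
    (a b : M) (t : ℂ) (ht : t ≠ 0) :
    span ℂ ({t • a, t • b} : Set M) = span ℂ ({a, b} : Set M) := by
  apply le_antisymm
  · rw [span_le]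
    rintro x hx
    rcases hx with rfl | hx
    · exact smul_mem _ t (subset_span (by simp))
    · rw [Set.mem_singleton_iff] at hx
      subst hx
      exact smul_mem _ t (subset_span (by simp))
  · rw [span_le]
    have key : ∀ c : M, c ∈ ({a, b} : Set M) → c ∈ span ℂ ({t • a, t • b} : Set M) := by
      intro c hc
      have h2 : c = t⁻¹ • (t • c) := by rw [smul_smul, inv_mul_cancel₀ ht, one_smul]
      rw [h2]
      apply smul_mem
      apply subset_span
      rcases hc with rfl | hc
      · simp
      · rw [Set.mem_singleton_iff] at hc; subst hc; simp
    exact key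

set_option maxHeartbeats 1000000 in
set_option synthInstance.maxHeartbeats 100000 in
/-- If L₁, L₂, L₃, L₄ are four pairwise disjoint lines in ℙ³ that do not
all lie on a common quadric surface, then they have at most two common transversals.

Lines are 2-dimensional linear subspaces of ℂ⁴ (disjoint in ℙ³ means trivially
intersecting subspaces); a quadric surface is the zero set of a nonzero homogeneous
degree-2 polynomial in 4 variables over ℂ; a common transversal is a line meeting all
four lines. -/
theorem stmt_14 (L : Fin 4 → Submodule ℂ (Fin 4 → ℂ))
    (hrk : ∀ i, Module.finrank ℂ (L i) = 2)
    (hdisj : ∀ i j, i ≠ j → L i ⊓ L j = ⊥)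
    (hnoq : ¬ ∃ q : MvPolynomial (Fin 4) ℂ, q ≠ 0 ∧ q.IsHomogeneous 2 ∧
          ∀ i, ∀ w ∈ L i, MvPolynomial.eval w q = 0) :
    ∃ A B : Submodule ℂ (Fin 4 → ℂ),
      {W : Submodule ℂ (Fin 4 → ℂ) |
        Module.finrank ℂ W = 2 ∧ ∀ i, W ⊓ L i ≠ ⊥} ⊆ {A, B} := by
  classical
  have hc : ∀ i j, i ≠ j → IsCompl (L i) (L j) := fun i j hij =>
    aux_iscompl (hrk i) (hrk j) (hdisj i j hij)
  set π1 : (Fin 4 → ℂ) →ₗ[ℂ] L 0 := (L 0).linearProjOfIsCompl (L 1) (hc 0 1 (by decide)) with hπ1def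
  set π2 : (Fin 4 → ℂ) →ₗ[ℂ] L 1 := (L 1).linearProjOfIsCompl (L 0) (hc 0 1 (by decide)).symm with hπ2def
  have hdec : ∀ v : Fin 4 → ℂ, (↑(π1 v) : Fin 4 → ℂ) + ↑(π2 v) = v := fun v =>
    Submodule.projection_add_projection_eq_self (hc 0 1 (by decide)) v
  have hπ1L : ∀ x : L 0, π1 ↑x = x := fun x =>
    Submodule.linearProjOfIsCompl_apply_left (hc 0 1 (by decide)) x
  have hπ1R : ∀ y : L 1, π1 ↑y = 0 := fun y =>
    Submodule.linearProjOfIsCompl_apply_right (hc 0 1 (by decide)) y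
  have hπ2L : ∀ y : L 1, π2 ↑y = y := fun y =>
    Submodule.linearProjOfIsCompl_apply_left (hc 0 1 (by decide)).symm y
  have hπ2R : ∀ x : L 0, π2 ↑x = 0 := fun x =>
    Submodule.linearProjOfIsCompl_apply_right (hc 0 1 (by decide)).symm x
  -- graph maps for L 2 and L 3
  have hgraph : ∀ k : Fin 4, k ≠ 0 → k ≠ 1 → ∃ f : L 0 →ₗ[ℂ] L 1,
      (∀ x : L 0, ((x : Fin 4 → ℂ) + ↑(f x)) ∈ L k) ∧
      (∀ w ∈ L k, ∃ x : L 0, w = (x : Fin 4 → ℂ) + ↑(f x)) := by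
    intro k hk0 hk1
    have hker : ∀ w : L k, π1 ↑w = 0 → w = 0 := by
      intro w hw
      have h1 : (w : Fin 4 → ℂ) ∈ L 1 := by
        have h2 := hdec ↑w
        rw [hw] at h2
        simp only [ZeroMemClass.coe_zero, zero_add] at h2
        rw [← h2]
        exact (π2 ↑w).2
      have h2 : (w : Fin 4 → ℂ) ∈ L k ⊓ L 1 := ⟨w.2, h1⟩
      rw [hdisj k 1 hk1] at h2
      exact Subtype.ext (by simpa using h2)
    have hinj : Function.Injective ⇑(π1 ∘ₗ (L k).subtype) := by
      intro a b hab
      simp only [LinearMap.comp_apply, Submodule.subtype_apply] at hab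
      have h3 : π1 ↑(a - b) = 0 := by
        rw [Submodule.coe_sub, map_sub, hab, sub_self]
      have h4 := hker _ h3
      rwa [sub_eq_zero] at h4
    have hsurj : Function.Surjective ⇑(π1 ∘ₗ (L k).subtype) :=
      (LinearMap.injective_iff_surjective_of_finrank_eq_finrank
        (by rw [hrk k, hrk 0])).mp hinj
    set E := LinearEquiv.ofBijective (π1 ∘ₗ (L k).subtype) ⟨hinj, hsurj⟩ with hEdef
    refine ⟨(π2 ∘ₗ (L k).subtype) ∘ₗ (E.symm : L 0 →ₗ[ℂ] L k), ?_, ?_⟩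
    · intro x
      have h1 : π1 ↑(E.symm x) = x := E.apply_symm_apply x
      show ((x : Fin 4 → ℂ) + ↑(π2 ↑(E.symm x))) ∈ L k
      nth_rewrite 1 [← h1]
      rw [hdec ↑(E.symm x)]
      exact (E.symm x).2
    · intro w hw
      refine ⟨E ⟨w, hw⟩, ?_⟩
      have hsx : E.symm (E ⟨w, hw⟩) = ⟨w, hw⟩ := E.symm_apply_apply _
      show w = ↑(E ⟨w, hw⟩) + ↑(π2 ↑(E.symm (E ⟨w, hw⟩)))
      rw [hsx]
      have h6 : (↑(E ⟨w, hw⟩) : Fin 4 → ℂ) = ↑(π1 w) := rfl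
      rw [h6]
      exact (hdec w).symm
  obtain ⟨f, hfmem, hfgraph⟩ := hgraph 2 (by decide) (by decide)
  obtain ⟨g, hgmem, hggraph⟩ := hgraph 3 (by decide) (by decide)
  have hfinj : ∀ x : L 0, f x = 0 → x = 0 := by
    intro x hx
    have h1 := hfmem x
    rw [hx] at h1
    simp only [ZeroMemClass.coe_zero, add_zero] at h1
    have h2 : (x : Fin 4 → ℂ) ∈ L 0 ⊓ L 2 := ⟨x.2, h1⟩
    rw [hdisj 0 2 (by decide)] at h2
    exact Subtype.ext (by simpa using h2)
  have hginj : ∀ x : L 0, g x = 0 → x = 0 := by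
    intro x hx
    have h1 := hgmem x
    rw [hx] at h1
    simp only [ZeroMemClass.coe_zero, add_zero] at h1
    have h2 : (x : Fin 4 → ℂ) ∈ L 0 ⊓ L 3 := ⟨x.2, h1⟩
    rw [hdisj 0 3 (by decide)] at h2
    exact Subtype.ext (by simpa using h2)
  -- characterization of transversals
  have key : ∀ W : Submodule ℂ (Fin 4 → ℂ), Module.finrank ℂ W = 2 → (∀ i, W ⊓ L i ≠ ⊥) →
      ∃ v : L 0, v ≠ 0 ∧ (∃ c : ℂ, g v = c • f v) ∧
        W = span ℂ {(v : Fin 4 → ℂ), ↑(f v)} := by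
    intro W hWrk hWint
    obtain ⟨v1, hv1m, hv10⟩ := Submodule.exists_mem_ne_zero_of_ne_bot (hWint 0)
    obtain ⟨hv1W, hv1L⟩ : v1 ∈ W ∧ v1 ∈ L 0 := hv1m
    obtain ⟨w, hwm, hw0⟩ := Submodule.exists_mem_ne_zero_of_ne_bot (hWint 2)
    obtain ⟨hwW, hwL⟩ : w ∈ W ∧ w ∈ L 2 := hwm
    obtain ⟨x, hxw⟩ := hfgraph w hwL
    set x1 : L 0 := ⟨v1, hv1L⟩ with hx1def
    have hx0 : x ≠ 0 := by
      intro h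
      rw [h] at hxw
      simp only [map_zero, ZeroMemClass.coe_zero, add_zero] at hxw
      exact hw0 hxw
    have hfx0 : f x ≠ 0 := fun h => hx0 (hfinj x h)
    have hπ1v1 : π1 v1 = x1 := hπ1L x1
    have hπ2v1 : π2 v1 = 0 := hπ2R x1
    have hπ1w : π1 w = x := by
      rw [hxw, map_add, hπ1L x, hπ1R (f x), add_zero]
    have hπ2w : π2 w = f x := by
      rw [hxw, map_add, hπ2R x, hπ2L (f x), zero_add]
    have hind : ∀ a b : ℂ, a • v1 + b • w = 0 → a = 0 ∧ b = 0 := by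
      intro a b hab
      have h2 : b • f x = 0 := by
        have h3 := congrArg π2 hab
        simpa [map_add, map_smul, hπ2v1, hπ2w] using h3
      have hb : b = 0 := by
        rcases smul_eq_zero.mp h2 with h | h
        · exact h
        · exact absurd h hfx0
      refine ⟨?_, hb⟩
      rw [hb, zero_smul, add_zero] at hab
      rcases smul_eq_zero.mp hab with h | h
      · exact h
      · exact absurd h hv10
    have hWspan : W = span ℂ {v1, w} := by
      have hle : span ℂ ({v1, w} : Set (Fin 4 → ℂ)) ≤ W := by
        rw [span_le]
        rintro y hy
        rcases hy with rfl | hy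
        · exact hv1W
        · rw [Set.mem_singleton_iff] at hy; subst hy; exact hwW
      exact (Submodule.eq_of_le_of_finrank_le hle
        (by rw [hWrk, aux_finrank_span_pair hind])).symm
    -- use W ⊓ L 1 to show x is parallel to x1
    obtain ⟨u, hum, hu0⟩ := Submodule.exists_mem_ne_zero_of_ne_bot (hWint 1)
    obtain ⟨huW, huL⟩ : u ∈ W ∧ u ∈ L 1 := hum
    rw [hWspan] at huW
    obtain ⟨a, b, hab⟩ := Submodule.mem_span_pair.mp huW
    have hπ1u : π1 u = 0 := hπ1R ⟨u, huL⟩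
    have hπ2u : π2 u = ⟨u, huL⟩ := hπ2L ⟨u, huL⟩
    have h5 : a • x1 + b • x = 0 := by
      have h6 := congrArg π1 hab
      simp only [map_add, map_smul, hπ1v1, hπ1w, hπ1u] at h6
      exact h6
    have h6 : b • f x = ⟨u, huL⟩ := by
      have h7 := congrArg π2 hab
      simp only [map_add, map_smul, hπ2v1, hπ2w, hπ2u, smul_zero, zero_add] at h7
      exact h7
    have hb0 : b ≠ 0 := by
      intro h
      rw [h, zero_smul] at h6
      apply hu0
      have := congrArg (Subtype.val) h6
      simpa using this.symm
    have hxpar : x = (-a * b⁻¹) • x1 := by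
      have h7 : b • x = -(a • x1) := by
        rw [← neg_add_eq_zero] at h5
        linear_combination (norm := module) -h5
      calc x = b⁻¹ • (b • x) := by rw [smul_smul, inv_mul_cancel₀ hb0, one_smul]
        _ = b⁻¹ • (-(a • x1)) := by rw [h7]
        _ = (-a * b⁻¹) • x1 := by
            rw [smul_neg, smul_smul]
            rw [← neg_smul]
            ring_nf
    set t : ℂ := -a * b⁻¹ with htdef
    have ht0 : t ≠ 0 := by
      intro h
      apply hx0
      rw [hxpar, h, zero_smul]
    -- W = span {x, f x}
    have hcx : (↑x : Fin 4 → ℂ) = t • v1 := by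
      rw [hxpar]
      rfl
    have hcfx : (↑(f x) : Fin 4 → ℂ) = t • ↑(f x1) := by
      rw [hxpar, map_smul]
      rfl
    have hW2 : W = span ℂ {(↑x : Fin 4 → ℂ), ↑(f x)} := by
      rw [hcx, hcfx, aux_span_pair_smul _ _ t ht0, hWspan]
      -- span {v1, w} = span {v1, f x1}
      apply le_antisymm
      · rw [span_le]
        rintro y hy
        rcases hy with rfl | hy
        · exact subset_span (by simp)
        · rw [Set.mem_singleton_iff] at hy
          subst hy
          exact Submodule.mem_span_pair.mpr ⟨t, t, by rw [hxw, hcx, hcfx]⟩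
      · rw [span_le]
        rintro y hy
        rcases hy with rfl | hy
        · exact subset_span (by simp)
        · rw [Set.mem_singleton_iff] at hy
          subst hy
          apply Submodule.mem_span_pair.mpr
          refine ⟨-1, t⁻¹, ?_⟩
          have h8 : (↑w : Fin 4 → ℂ) = t • v1 + t • ↑(f x1) := by
            rw [hxw, hcx, hcfx]
          rw [h8, smul_add, smul_smul, smul_smul, inv_mul_cancel₀ ht0, one_smul]
          module
    -- use W ⊓ L 3 for the eigen condition
    obtain ⟨u', hu'm, hu'0⟩ := Submodule.exists_mem_ne_zero_of_ne_bot (hWint 3)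
    obtain ⟨hu'W, hu'L⟩ : u' ∈ W ∧ u' ∈ L 3 := hu'm
    obtain ⟨y, hy⟩ := hggraph u' hu'L
    rw [hW2] at hu'W
    obtain ⟨p, q, hpq⟩ := Submodule.mem_span_pair.mp hu'W
    have hπ1u' : π1 u' = y := by
      rw [hy, map_add, hπ1L y, hπ1R (g y), add_zero]
    have hπ2u' : π2 u' = g y := by
      rw [hy, map_add, hπ2R y, hπ2L (g y), zero_add]
    have h9 : p • x = y := by
      have h10 := congrArg π1 hpq
      simp only [map_add, map_smul, hπ1u'] at h10
      rw [hπ1L x] at h10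
      rw [hπ1R (f x)] at h10
      simpa using h10
    have h10 : q • f x = g y := by
      have h11 := congrArg π2 hpq
      simp only [map_add, map_smul, hπ2u'] at h11
      rw [hπ2R x] at h11
      rw [hπ2L (f x)] at h11
      simpa using h11
    have hp0 : p ≠ 0 := by
      intro h
      rw [h, zero_smul] at h9
      apply hu'0
      rw [hy, ← h9]
      simp
    refine ⟨x, hx0, ⟨p⁻¹ * q, ?_⟩, hW2⟩
    have h11 : p • g x = q • f x := by
      rw [h10, ← h9, map_smul]
    calc g x = p⁻¹ • (p • g x) := by rw [smul_smul, inv_mul_cancel₀ hp0, one_smul]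
      _ = p⁻¹ • (q • f x) := by rw [h11]
      _ = (p⁻¹ * q) • f x := by rw [smul_smul]
  -- no quadric forces g not everywhere parallel to f
  have hnotall : ¬ ∀ x : L 0, ∃ c : ℂ, g x = c • f x := by
    intro hall
    apply hnoq
    set b : Basis (Fin 2) ℂ (L 1) := Module.finBasisOfFinrankEq ℂ (L 1) (hrk 1) with hbdef
    set φ : (Fin 4 → ℂ) →ₗ[ℂ] ℂ := (b.coord 0) ∘ₗ f ∘ₗ π1 with hφdef
    set ψ : (Fin 4 → ℂ) →ₗ[ℂ] ℂ := (b.coord 1) ∘ₗ π2 with hψdef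
    set φ' : (Fin 4 → ℂ) →ₗ[ℂ] ℂ := (b.coord 1) ∘ₗ f ∘ₗ π1 with hφ'def
    set ψ' : (Fin 4 → ℂ) →ₗ[ℂ] ℂ := (b.coord 0) ∘ₗ π2 with hψ'def
    obtain ⟨Q, hQh, hQe⟩ := aux_poly φ ψ φ' ψ'
    have hQeval : ∀ v : Fin 4 → ℂ, MvPolynomial.eval v Q =
        b.coord 0 (f (π1 v)) * b.coord 1 (π2 v) - b.coord 1 (f (π1 v)) * b.coord 0 (π2 v) := by
      intro v
      rw [hQe v]
      rfl
    refine ⟨Q, ?_, hQh, ?_⟩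
    · -- Q ≠ 0
      have hnt : Nontrivial (L 0) := by
        apply Module.nontrivial_of_finrank_pos (R := ℂ)
        rw [hrk 0]; norm_num
      obtain ⟨x0, hx00⟩ := exists_ne (0 : L 0)
      have hfx00 : f x0 ≠ 0 := fun h => hx00 (hfinj x0 h)
      set c0 : ℂ := b.coord 0 (f x0) with hc0def
      set c1 : ℂ := b.coord 1 (f x0) with hc1def
      have hcne : c0 ≠ 0 ∨ c1 ≠ 0 := by
        by_contra hcon
        push_neg at hcon
        apply hfx00
        have h12 := b.sum_repr (f x0)
        rw [Fin.sum_univ_two] at h12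
        have hc0 : b.repr (f x0) 0 = 0 := by rw [← Basis.coord_apply]; exact hcon.1
        have hc1 : b.repr (f x0) 1 = 0 := by rw [← Basis.coord_apply]; exact hcon.2
        rw [hc0, hc1, zero_smul, zero_smul, add_zero] at h12
        exact h12.symm
      -- choose z
      have hz : ∃ z : L 1, c0 * b.coord 1 z - c1 * b.coord 0 z ≠ 0 := by
        rcases hcne with h | h
        · refine ⟨b 1, ?_⟩
          simp [Basis.coord_apply, Basis.repr_self]
          exact h
        · refine ⟨b 0, ?_⟩
          simp [Basis.coord_apply, Basis.repr_self]
          exact h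
      obtain ⟨z, hzne⟩ := hz
      intro hQ0
      apply hzne
      have hπ1z : π1 ((↑x0 : Fin 4 → ℂ) + ↑z) = x0 := by
        rw [map_add, hπ1L x0, hπ1R z, add_zero]
      have hπ2z : π2 ((↑x0 : Fin 4 → ℂ) + ↑z) = z := by
        rw [map_add, hπ2R x0, hπ2L z, zero_add]
      have h13 : MvPolynomial.eval ((x0 : Fin 4 → ℂ) + (z : Fin 4 → ℂ)) Q = 0 := by
        rw [hQ0]
        exact map_zero _
      have h14 := hQeval ((x0 : Fin 4 → ℂ) + (z : Fin 4 → ℂ))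
      rw [h13, hπ1z, hπ2z] at h14
      exact h14.symm
    · -- vanishing on all four lines
      intro i v hv
      fin_cases i
      · rw [hQeval v]
        have hπ2v : π2 v = 0 := hπ2R ⟨v, hv⟩
        rw [hπ2v]
        simp
      · rw [hQeval v]
        have hπ1v : π1 v = 0 := hπ1R ⟨v, hv⟩
        rw [hπ1v]
        simp
      · obtain ⟨x, hx⟩ := hfgraph v hv
        rw [hQeval v, hx]
        have hπ1v : π1 ((↑x : Fin 4 → ℂ) + ↑(f x)) = x := by
          rw [map_add, hπ1L x, hπ1R (f x), add_zero]
        have hπ2v : π2 ((↑x : Fin 4 → ℂ) + ↑(f x)) = f x := by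
          rw [map_add, hπ2R x, hπ2L (f x), zero_add]
        rw [hπ1v, hπ2v]
        ring
      · obtain ⟨x, hx⟩ := hggraph v hv
        rw [hQeval v, hx]
        have hπ1v : π1 ((↑x : Fin 4 → ℂ) + ↑(g x)) = x := by
          rw [map_add, hπ1L x, hπ1R (g x), add_zero]
        have hπ2v : π2 ((↑x : Fin 4 → ℂ) + ↑(g x)) = g x := by
          rw [map_add, hπ2R x, hπ2L (g x), zero_add]
        rw [hπ1v, hπ2v]
        obtain ⟨c, hcx⟩ := hall x
        rw [hcx]
        simp only [map_smul, smul_eq_mul]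
        ring
  -- spans determined by direction
  have keyne : ∀ (v v' : L 0), v ≠ 0 → v' ≠ 0 → (∃ t : ℂ, v' = t • v) →
      span ℂ {(↑v' : Fin 4 → ℂ), ↑(f v')} = span ℂ {(↑v : Fin 4 → ℂ), ↑(f v)} := by
    rintro v v' hv hv' ⟨t, rfl⟩
    have ht0 : t ≠ 0 := by
      intro h
      apply hv'
      rw [h, zero_smul]
    have h1 : (↑(t • v) : Fin 4 → ℂ) = t • ↑v := rfl
    have h2 : (↑(f (t • v)) : Fin 4 → ℂ) = t • ↑(f v) := by rw [map_smul]; rfl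
    rw [h1, h2]
    exact aux_span_pair_smul _ _ t ht0
  -- main conclusion
  set S := {W : Submodule ℂ (Fin 4 → ℂ) |
    Module.finrank ℂ W = 2 ∧ ∀ i, W ⊓ L i ≠ ⊥} with hSdef
  by_cases hS : S.Nonempty
  · obtain ⟨A, hA⟩ := hS
    by_cases hS2 : ∃ B ∈ S, B ≠ A
    · obtain ⟨B, hB, hBA⟩ := hS2
      refine ⟨A, B, ?_⟩
      intro W hW
      by_contra hWnot
      simp only [Set.mem_insert_iff, Set.mem_singleton_iff, not_or] at hWnot
      obtain ⟨hWA, hWB⟩ := hWnot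
      obtain ⟨vW, hvW0, ⟨cW, hcW⟩, hWs⟩ := key W hW.1 hW.2
      obtain ⟨vA, hvA0, ⟨cA, hcA⟩, hAs⟩ := key A hA.1 hA.2
      obtain ⟨vB, hvB0, ⟨cB, hcB⟩, hBs⟩ := key B hB.1 hB.2
      -- non-proportionality between distinct transversals
      have hnpar : ∀ (v v' : L 0) (W1 W2 : Submodule ℂ (Fin 4 → ℂ)),
          v ≠ 0 → v' ≠ 0 → W1 = span ℂ {(↑v : Fin 4 → ℂ), ↑(f v)} →
          W2 = span ℂ {(↑v' : Fin 4 → ℂ), ↑(f v')} → W1 ≠ W2 → ¬ ∃ t : ℂ, v' = t • v := by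
        rintro v v' W1 W2 hv hv' hW1 hW2 hne ⟨t, ht⟩
        apply hne
        rw [hW1, hW2, keyne v v' hv hv' ⟨t, ht⟩]
      have hWA' := hnpar vA vW A W hvA0 hvW0 hAs hWs (Ne.symm hWA)
      have hWB' := hnpar vB vW B W hvB0 hvW0 hBs hWs (Ne.symm hWB)
      have hAB' := hnpar vA vB A B hvA0 hvB0 hAs hBs (Ne.symm hBA)
      -- vW, vA independent
      have hindWA : ∀ a b : ℂ, a • vW + b • vA = 0 → a = 0 ∧ b = 0 := by
        intro a b hab
        by_cases hA0 : a = 0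
        · refine ⟨hA0, ?_⟩
          rw [hA0, zero_smul, zero_add] at hab
          rcases smul_eq_zero.mp hab with h | h
          · exact h
          · exact absurd h hvA0
        · exfalso
          apply hWA'
          refine ⟨-b * a⁻¹, ?_⟩
          have h7 : a • vW = -(b • vA) := by
            linear_combination (norm := module) hab
          calc vW = a⁻¹ • (a • vW) := by rw [smul_smul, inv_mul_cancel₀ hA0, one_smul]
            _ = a⁻¹ • (-(b • vA)) := by rw [h7]
            _ = (-b * a⁻¹) • vA := by
                rw [smul_neg, smul_smul, ← neg_smul]
                ring_nf
      have htop : span ℂ ({vW, vA} : Set (L 0)) = ⊤ := by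
        apply Submodule.eq_top_of_finrank_eq
        rw [aux_finrank_span_pair hindWA, hrk 0]
      have hvBmem : vB ∈ span ℂ ({vW, vA} : Set (L 0)) := by rw [htop]; trivial
      obtain ⟨a, b, hab⟩ := Submodule.mem_span_pair.mp hvBmem
      have ha0 : a ≠ 0 := by
        intro h
        apply hAB'
        exact ⟨b, by rw [← hab, h, zero_smul, zero_add]⟩
      have hb0 : b ≠ 0 := by
        intro h
        have hva : vB = a • vW := by rw [← hab, h, zero_smul, add_zero]
        apply hWB'
        exact ⟨a⁻¹, by rw [hva, smul_smul, inv_mul_cancel₀ ha0, one_smul]⟩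
      have hindf : ∀ s u : ℂ, s • f vW + u • f vA = 0 → s = 0 ∧ u = 0 := by
        intro s u hsu
        have h1 : f (s • vW + u • vA) = 0 := by
          rw [map_add, map_smul, map_smul]; exact hsu
        exact hindWA s u (hfinj _ h1)
      have hexp : (a * cW) • f vW + (b * cA) • f vA =
          (a * cB) • f vW + (b * cB) • f vA := by
        calc (a * cW) • f vW + (b * cA) • f vA
            = a • (cW • f vW) + b • (cA • f vA) := by rw [← mul_smul, ← mul_smul]
          _ = a • g vW + b • g vA := by rw [hcW, hcA]
          _ = g (a • vW + b • vA) := by rw [map_add, map_smul, map_smul]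
          _ = g vB := by rw [hab]
          _ = cB • f vB := hcB
          _ = cB • f (a • vW + b • vA) := by rw [hab]
          _ = (a * cB) • f vW + (b * cB) • f vA := by
              rw [map_add, map_smul, map_smul]
              module
      have hz2 : (a * cW - a * cB) • f vW + (b * cA - b * cB) • f vA = 0 := by
        linear_combination (norm := module) hexp
      obtain ⟨h1, h2⟩ := hindf _ _ hz2
      have hcWB : cW = cB := by
        have h3 : a * (cW - cB) = 0 := by ring_nf; linear_combination h1
        rcases mul_eq_zero.mp h3 with h | h
        · exact absurd h ha0
        · exact sub_eq_zero.mp h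
      have hcAB : cA = cB := by
        have h3 : b * (cA - cB) = 0 := by ring_nf; linear_combination h2
        rcases mul_eq_zero.mp h3 with h | h
        · exact absurd h hb0
        · exact sub_eq_zero.mp h
      apply hnotall
      intro x
      have hx : x ∈ span ℂ ({vW, vA} : Set (L 0)) := by rw [htop]; trivial
      obtain ⟨p, q, hpq⟩ := Submodule.mem_span_pair.mp hx
      refine ⟨cB, ?_⟩
      rw [← hpq]
      calc g (p • vW + q • vA) = p • g vW + q • g vA := by
            rw [map_add, map_smul, map_smul]
        _ = p • (cB • f vW) + q • (cB • f vA) := by rw [hcW, hcA, hcWB, hcAB]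
        _ = cB • f (p • vW + q • vA) := by
            rw [map_add, map_smul, map_smul]
            module
    · push_neg at hS2
      refine ⟨A, A, ?_⟩
      intro W hW
      simp [hS2 W hW]
  · refine ⟨⊥, ⊥, ?_⟩
    intro W hW
    exact absurd ⟨W, hW⟩ hS
end

section
/- Let C = (C₁,…,C_m) be an arrangement of pinhole cameras with distinct centers, and let V_C = {ℓ ∈ (P^2)^m : rank [C₁^T ℓ₁ | ⋯ | C_m^T ℓ_m] ≤ 2} and U_C = {h ∈ (P^3)^m : rank [h₁ | ⋯ | h_m] ≤ 2 and c_i^T h_i = 0 for all i}. Then the maps ℓ_i ↦ C_i^T ℓ_i and h_i ↦ (C_i^T)^† h_i are mutually inverse regular maps, so V_C and U_C are isomorphic varieties. -/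
open Matrix

private lemma psi_phi_aux (A : Matrix (Fin 3) (Fin 4) ℂ)
    (hinv : IsUnit (A * Aᵀ).det) (x : Fin 3 → ℂ) :
    (A * Aᵀ)⁻¹ *ᵥ (A *ᵥ (Aᵀ *ᵥ x)) = x := by
  rw [mulVec_mulVec, mulVec_mulVec, Matrix.mul_assoc,
    Matrix.nonsing_inv_mul _ hinv, Matrix.one_mulVec]

private lemma phi_psi_aux (A : Matrix (Fin 3) (Fin 4) ℂ) (hr : A.rank = 3)
    (c : Fin 4 → ℂ) (hc : c ≠ 0) (hk : A *ᵥ c = 0)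
    (hinv : IsUnit (A * Aᵀ).det) (h : Fin 4 → ℂ) (hh : c ⬝ᵥ h = 0) :
    Aᵀ *ᵥ ((A * Aᵀ)⁻¹ *ᵥ (A *ᵥ h)) = h := by
  -- the linear functional v ↦ c ⬝ᵥ v
  set g : (Fin 4 → ℂ) →ₗ[ℂ] ℂ :=
    { toFun := fun v => c ⬝ᵥ v
      map_add' := fun u v => dotProduct_add c u v
      map_smul' := fun t v => by simp [dotProduct_smul, smul_eq_mul] } with hg
  obtain ⟨j, hj⟩ : ∃ j, c j ≠ 0 := by
    by_contra hcon; push_neg at hcon; exact hc (funext hcon)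
  have hsurj : Function.Surjective g := by
    intro t
    exact ⟨(t / c j) • (Pi.single j 1 : Fin 4 → ℂ), by
      simp [hg, dotProduct_smul, dotProduct_single, smul_eq_mul, div_mul_cancel₀ t hj]⟩
  have hrange : LinearMap.range g = ⊤ := LinearMap.range_eq_top.mpr hsurj
  have hkerdim : Module.finrank ℂ (LinearMap.ker g) = 3 := by
    have := LinearMap.finrank_range_add_finrank_ker g
    rw [hrange] at this
    simp [finrank_top, Module.finrank_pi] at this ⊢
    omega
  have hsub : LinearMap.range Aᵀ.mulVecLin ≤ LinearMap.ker g := by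
    rintro _ ⟨x, rfl⟩
    simp only [LinearMap.mem_ker, hg, LinearMap.coe_mk, AddHom.coe_mk, mulVecLin_apply]
    rw [dotProduct_mulVec, vecMul_transpose, hk, zero_dotProduct]
  have hrdim : Module.finrank ℂ (LinearMap.range Aᵀ.mulVecLin) = 3 := by
    have := Matrix.rank_transpose A
    rw [hr] at this
    exact this
  have heq : LinearMap.range Aᵀ.mulVecLin = LinearMap.ker g :=
    Submodule.eq_of_le_of_finrank_le hsub (by rw [hkerdim, hrdim])
  have hmem : h ∈ LinearMap.range Aᵀ.mulVecLin := by
    rw [heq]; exact hh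
  obtain ⟨x, hx⟩ := hmem
  simp only [mulVecLin_apply] at hx
  rw [← hx, mulVec_mulVec, mulVec_mulVec, mulVec_mulVec, Matrix.mul_assoc,
    Matrix.mul_assoc, Matrix.nonsing_inv_mul _ hinv, Matrix.mul_one]

/-- For an arrangement C = (C₁,…,C_m) of pinhole cameras with distinct
centers, the maps ℓᵢ ↦ Cᵢᵀℓᵢ and hᵢ ↦ (Cᵢᵀ)†hᵢ = (CᵢCᵢᵀ)⁻¹Cᵢhᵢ are mutually inverse
regular maps between the determinantal variety V_C (tuples of image-line equations whose
back-projected planes [Cᵢᵀℓᵢ] form a matrix of rank ≤ 2) and the variety U_C of tuples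
of back-projected planes (rank ≤ 2, each plane through the corresponding center), so
V_C and U_C are isomorphic.

Points of ℙ² and ℙ³ are represented by nonzero vectors; the pseudo-inverse
(Cᵢᵀ)† = (CᵢCᵢᵀ)⁻¹Cᵢ requires CᵢCᵢᵀ to be invertible. -/
theorem stmt_17 (m : ℕ) (C : Fin m → Matrix (Fin 3) (Fin 4) ℂ)
    (hrank : ∀ i, (C i).rank = 3)
    (c : Fin m → Fin 4 → ℂ) (hc0 : ∀ i, c i ≠ 0) (hker : ∀ i, (C i) *ᵥ (c i) = 0)
    (hdist : ∀ i j, i ≠ j → ∀ t : ℂ, c j ≠ t • c i)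
    (hinv : ∀ i, IsUnit ((C i) * (C i)ᵀ).det) :
    let φ : (Fin m → Fin 3 → ℂ) → (Fin m → Fin 4 → ℂ) := fun ℓ i => (C i)ᵀ *ᵥ ℓ i
    let ψ : (Fin m → Fin 4 → ℂ) → (Fin m → Fin 3 → ℂ) :=
      fun h i => ((C i) * (C i)ᵀ)⁻¹ *ᵥ ((C i) *ᵥ h i)
    let Vc : Set (Fin m → Fin 3 → ℂ) :=
      {ℓ | (∀ i, ℓ i ≠ 0) ∧
        (Matrix.of fun (r : Fin 4) (i : Fin m) => ((C i)ᵀ *ᵥ ℓ i) r).rank ≤ 2}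
    let Uc : Set (Fin m → Fin 4 → ℂ) :=
      {h | (∀ i, h i ≠ 0) ∧
        (Matrix.of fun (r : Fin 4) (i : Fin m) => h i r).rank ≤ 2 ∧
        ∀ i, c i ⬝ᵥ h i = 0}
    Set.MapsTo φ Vc Uc ∧ Set.MapsTo ψ Uc Vc ∧
      (∀ ℓ ∈ Vc, ψ (φ ℓ) = ℓ) ∧ (∀ h ∈ Uc, φ (ψ h) = h) := by
  intro φ ψ Vc Uc
  -- key pointwise identities
  have hpsiphi : ∀ (ℓ : Fin m → Fin 3 → ℂ) i, ψ (φ ℓ) i = ℓ i := by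
    intro ℓ i
    exact psi_phi_aux (C i) (hinv i) (ℓ i)
  have hphipsi : ∀ (h : Fin m → Fin 4 → ℂ), (∀ i, c i ⬝ᵥ h i = 0) →
      ∀ i, φ (ψ h) i = h i := by
    intro h hh i
    exact phi_psi_aux (C i) (hrank i) (c i) (hc0 i) (hker i) (hinv i) (h i) (hh i)
  refine ⟨?_, ?_, ?_, ?_⟩
  · rintro ℓ ⟨hne, hr⟩
    refine ⟨?_, ?_, ?_⟩
    · intro i h0
      apply hne i
      have := hpsiphi ℓ i
      rw [← this]
      show ((C i) * (C i)ᵀ)⁻¹ *ᵥ ((C i) *ᵥ (φ ℓ i)) = 0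
      rw [h0]
      simp
    · exact hr
    · intro i
      show c i ⬝ᵥ ((C i)ᵀ *ᵥ ℓ i) = 0
      rw [dotProduct_mulVec, vecMul_transpose, hker i, zero_dotProduct]
  · rintro h ⟨hne, hr, hcp⟩
    refine ⟨?_, ?_⟩
    · intro i h0
      apply hne i
      rw [← hphipsi h hcp i]
      show (C i)ᵀ *ᵥ (ψ h i) = 0
      rw [h0]
      simp
    · have : (Matrix.of fun (r : Fin 4) (i : Fin m) => ((C i)ᵀ *ᵥ ψ h i) r)
          = (Matrix.of fun (r : Fin 4) (i : Fin m) => h i r) := by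
        ext r i
        exact congrFun (hphipsi h hcp i) r
      rw [this]
      exact hr
  · intro ℓ _
    funext i
    exact hpsiphi ℓ i
  · rintro h ⟨_, _, hcp⟩
    funext i
    exact hphipsi h hcp i
end

section
/- Let C be an arrangement of m ≥ 2 pinhole cameras with distinct centers and let L be a line in P^3 not through any center, with ℓ = Υ_C(L) its tuple of image lines and M(ℓ) = [C₁^T ℓ₁ | ⋯ | C_m^T ℓ_m]. If rank M(ℓ) = 2 then Υ_C^{-1}(ℓ) = {L}; if rank M(ℓ) = 1 then Υ_C^{-1}(ℓ) is infinite. -/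
open Matrix

/-- Let C be an arrangement of m ≥ 2 pinhole cameras with distinct
centers, L a line in ℙ³ not through any center, and ℓ = Υ_C(L) its tuple of image-line
equations, with M(ℓ) = [C₁ᵀℓ₁ | ⋯ | C_mᵀℓ_m].  If rank M(ℓ) = 2 then Υ_C⁻¹(ℓ) = {L};
if rank M(ℓ) = 1 then Υ_C⁻¹(ℓ) is infinite.

Lines in ℙ³ are 2-dimensional subspaces of ℂ⁴; a line W maps to ℓ under Υ_C iff W avoids
all centers and every point p of W projects onto each image line, i.e. (Cᵢp)ᵀℓᵢ = 0. -/
theorem stmt_18 (m : ℕ) (hm : 2 ≤ m) (C : Fin m → Matrix (Fin 3) (Fin 4) ℂ)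
    (hrank : ∀ i, (C i).rank = 3)
    (c : Fin m → Fin 4 → ℂ) (hc0 : ∀ i, c i ≠ 0) (hker : ∀ i, (C i) *ᵥ (c i) = 0)
    (hdist : ∀ i j, i ≠ j → ∀ t : ℂ, c j ≠ t • c i)
    (L : Submodule ℂ (Fin 4 → ℂ)) (hL : Module.finrank ℂ L = 2)
    (hLc : ∀ i, c i ∉ L)
    (ℓ : Fin m → Fin 3 → ℂ) (hℓ0 : ∀ i, ℓ i ≠ 0)
    (himg : ∀ i, ∀ p ∈ L, ((C i) *ᵥ p) ⬝ᵥ ℓ i = 0) :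
    ((Matrix.of fun (r : Fin 4) (i : Fin m) => ((C i)ᵀ *ᵥ ℓ i) r).rank = 2 →
      {W : Submodule ℂ (Fin 4 → ℂ) | Module.finrank ℂ W = 2 ∧ (∀ i, c i ∉ W) ∧
        ∀ i, ∀ p ∈ W, ((C i) *ᵥ p) ⬝ᵥ ℓ i = 0} = {L}) ∧
    ((Matrix.of fun (r : Fin 4) (i : Fin m) => ((C i)ᵀ *ᵥ ℓ i) r).rank = 1 →
      {W : Submodule ℂ (Fin 4 → ℂ) | Module.finrank ℂ W = 2 ∧ (∀ i, c i ∉ W) ∧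
        ∀ i, ∀ p ∈ W, ((C i) *ᵥ p) ⬝ᵥ ℓ i = 0}.Infinite) := by
  classical
  set v : Fin m → Fin 4 → ℂ := fun i => (C i)ᵀ *ᵥ ℓ i with hv
  have hdot : ∀ i (p : Fin 4 → ℂ), ((C i) *ᵥ p) ⬝ᵥ ℓ i = v i ⬝ᵥ p := by
    intro i p
    rw [dotProduct_comm, Matrix.dotProduct_mulVec, hv]
    simp [Matrix.mulVec_transpose]
  set M : Matrix (Fin 4) (Fin m) ℂ := Matrix.of fun r i => v i r with hM
  set K : Submodule ℂ (Fin 4 → ℂ) := LinearMap.ker Mᵀ.mulVecLin with hK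
  have hmemK : ∀ p, p ∈ K ↔ ∀ i, v i ⬝ᵥ p = 0 := by
    intro p
    rw [hK, LinearMap.mem_ker]
    simp [hM, funext_iff, Matrix.mulVec, Matrix.vecMul, dotProduct, mul_comm]
  have hKrank : M.rank + Module.finrank ℂ K = 4 := by
    have h := LinearMap.finrank_range_add_finrank_ker (Mᵀ.mulVecLin)
    rw [← Matrix.rank_transpose M]
    unfold Matrix.rank
    rw [hK]
    simpa using h
  have hcond : ∀ W : Submodule ℂ (Fin 4 → ℂ),
      (∀ i, ∀ p ∈ W, ((C i) *ᵥ p) ⬝ᵥ ℓ i = 0) ↔ W ≤ K := by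
    intro W
    constructor
    · intro h p hp
      rw [hmemK]
      intro i
      rw [← hdot]
      exact h i p hp
    · intro h i p hp
      rw [hdot]
      exact (hmemK p).mp (h hp) i
  have hLK : L ≤ K := (hcond L).mp himg
  constructor
  · -- rank 2 case
    intro h2
    have h2' : M.rank = 2 := h2
    have hKfr : Module.finrank ℂ K = 2 := by omega
    have hLeq : L = K := Submodule.eq_of_le_of_finrank_eq hLK (by rw [hL, hKfr])
    ext W
    simp only [Set.mem_setOf_eq, Set.mem_singleton_iff]
    constructor
    · rintro ⟨hW2, _, hWcond⟩
      have hWK : W ≤ K := (hcond W).mp hWcond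
      rw [hLeq]
      exact Submodule.eq_of_le_of_finrank_eq hWK (by rw [hW2, hKfr])
    · rintro rfl
      exact ⟨hL, hLc, himg⟩
  · -- rank 1 case
    intro h1
    have h1' : M.rank = 1 := h1
    have hKfr : Module.finrank ℂ K = 3 := by omega
    -- each v i is nonzero
    have hvne : ∀ i, v i ≠ 0 := by
      intro i hvi
      have hrn := LinearMap.finrank_range_add_finrank_ker ((C i)ᵀ.mulVecLin)
      have hr3 : Module.finrank ℂ (LinearMap.range ((C i)ᵀ.mulVecLin)) = 3 := by
        have := Matrix.rank_transpose (C i)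
        rw [hrank i] at this
        exact this
      have hk0 : Module.finrank ℂ (LinearMap.ker ((C i)ᵀ.mulVecLin)) = 0 := by
        have h3 : Module.finrank ℂ (Fin 3 → ℂ) = 3 := by simp
        rw [h3] at hrn; omega
      have hkbot : LinearMap.ker ((C i)ᵀ.mulVecLin) = ⊥ :=
        Submodule.finrank_eq_zero.mp hk0
      have : ℓ i ∈ LinearMap.ker ((C i)ᵀ.mulVecLin) := by
        rw [LinearMap.mem_ker]
        exact hvi
      rw [hkbot, Submodule.mem_bot] at this
      exact hℓ0 i this
    -- each center lies in K
    have hcK : ∀ i, c i ∈ K := by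
      intro i
      set f : (Fin 4 → ℂ) →ₗ[ℂ] ℂ := LinearMap.proj i ∘ₗ Mᵀ.mulVecLin with hf
      have hfapp : ∀ p, f p = v i ⬝ᵥ p := by
        intro p
        simp [hf, hM, Matrix.mulVec, Matrix.vecMul, dotProduct, mul_comm]
      have hKf : K ≤ LinearMap.ker f := by
        intro p hp
        rw [LinearMap.mem_ker, hfapp]
        exact (hmemK p).mp hp i
      -- f is nonzero
      have hfne : f ≠ 0 := by
        intro hf0
        apply hvne i
        funext j
        have := congrArg (fun g => g (Pi.single j 1)) hf0
        simpa [hfapp, dotProduct_single] using this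
      have hrangene : LinearMap.range f ≠ ⊥ := by
        rwa [Ne, LinearMap.range_eq_bot]
      have hrn := LinearMap.finrank_range_add_finrank_ker f
      have hrle : Module.finrank ℂ (LinearMap.range f) ≤ 1 := by
        simpa using Submodule.finrank_le (LinearMap.range f)
      have hrpos : Module.finrank ℂ (LinearMap.range f) ≠ 0 := by
        intro h0
        exact hrangene (Submodule.finrank_eq_zero.mp h0)
      have hkerf : Module.finrank ℂ (LinearMap.ker f) = 3 := by
        simp at hrn; omega
      have : K = LinearMap.ker f :=
        Submodule.eq_of_le_of_finrank_eq hKf (by rw [hKfr, hkerf])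
      rw [this, LinearMap.mem_ker, hfapp, ← hdot, hker]
      simp
    -- build the infinite family inside K
    haveI : FiniteDimensional ℂ K := inferInstance
    let b : Module.Basis (Fin 3) ℂ K := Module.finBasisOfFinrankEq ℂ K hKfr
    let u : ℂ → K := fun t => b 0 + t • b 2
    let w : ℂ → K := fun t => b 1 + t ^ 2 • b 2
    have hbli := Fintype.linearIndependent_iff.mp b.linearIndependent
    have hcomb : ∀ (t s r : ℂ), s • u t + r • w t
        = ∑ j : Fin 3, (![s, r, s * t + r * t ^ 2]) j • b j := by
      intro t s r
      simp only [u, w, Fin.sum_univ_three, Matrix.cons_val_zero, Matrix.cons_val_one,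
        Matrix.head_cons, Matrix.cons_val_two, Matrix.tail_cons, smul_add, smul_smul, add_smul]
      abel
    have hli : ∀ t : ℂ, LinearIndependent ℂ ![u t, w t] := by
      intro t
      rw [LinearIndependent.pair_iff]
      intro s r hsr
      have := hbli (![s, r, s * t + r * t ^ 2]) (by rw [← hcomb t s r]; exact hsr)
      exact ⟨this 0, this 1⟩
    let W' : ℂ → Submodule ℂ K := fun t => Submodule.span ℂ (Set.range ![u t, w t])
    let W : ℂ → Submodule ℂ (Fin 4 → ℂ) := fun t => (W' t).map K.subtype
    have hW'fr : ∀ t, Module.finrank ℂ (W' t) = 2 := by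
      intro t
      rw [finrank_span_eq_card (hli t)]
      simp
    have hWfr : ∀ t, Module.finrank ℂ (W t) = 2 := by
      intro t
      rw [Submodule.finrank_map_subtype_eq]
      exact hW'fr t
    have hWK : ∀ t, W t ≤ K := fun t => Submodule.map_subtype_le K (W' t)
    -- injectivity
    have hWinj : Function.Injective W := by
      intro t s h
      have hW's : W' t = W' s :=
        Submodule.map_injective_of_injective K.injective_subtype h
      have hu : u t ∈ W' s := by
        rw [← hW's]
        exact Submodule.subset_span ⟨0, rfl⟩
      rw [Submodule.mem_span_range_iff_exists_fun] at hu
      obtain ⟨g, hg⟩ := hu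
      rw [Fin.sum_univ_two] at hg
      simp only [Matrix.cons_val_zero, Matrix.cons_val_one, Matrix.head_cons] at hg
      have hzero : (g 0 - 1) • b 0 + g 1 • b 1 + (g 0 * s + g 1 * s ^ 2 - t) • b 2 = 0 := by
        have h1 : g 0 • u s + g 1 • w s - u t = 0 := by rw [hg]; abel
        rw [hcomb s (g 0) (g 1)] at h1
        simp only [u, Fin.sum_univ_three, Matrix.cons_val_zero, Matrix.cons_val_one,
          Matrix.head_cons, Matrix.cons_val_two, Matrix.tail_cons] at h1
        linear_combination (norm := module) h1
      have := hbli (![g 0 - 1, g 1, g 0 * s + g 1 * s ^ 2 - t]) (by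
        rw [Fin.sum_univ_three]
        simp only [Matrix.cons_val_zero, Matrix.cons_val_one, Matrix.head_cons,
          Matrix.cons_val_two, Matrix.tail_cons]
        exact hzero)
      have e0 : g 0 - 1 = 0 := this 0
      have e1 : g 1 = 0 := this 1
      have e2 : g 0 * s + g 1 * s ^ 2 - t = 0 := this 2
      have : g 0 = 1 := by linear_combination e0
      rw [this, e1] at e2
      linear_combination -e2
    -- centers and membership polynomials
    let ci : Fin m → K := fun i => ⟨c i, hcK i⟩
    let a : Fin m → Fin 3 → ℂ := fun i j => b.repr (ci i) j
    let P : Fin m → Polynomial ℂ := fun i =>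
      Polynomial.C (a i 1) * Polynomial.X ^ 2 + Polynomial.C (a i 0) * Polynomial.X
        - Polynomial.C (a i 2)
    have hPne : ∀ i, P i ≠ 0 := by
      intro i hP0
      have h2 := congrArg (fun p => Polynomial.coeff p 2) hP0
      have h1 := congrArg (fun p => Polynomial.coeff p 1) hP0
      have h0 := congrArg (fun p => Polynomial.coeff p 0) hP0
      simp [P, Polynomial.coeff_one, Polynomial.coeff_X] at h0 h1 h2
      have hrepr0 : b.repr (ci i) = 0 := by
        ext j
        fin_cases j
        · exact h1
        · exact h2
        · exact h0
      have : ci i = 0 := by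
        have := b.repr.map_eq_zero_iff.mp hrepr0
        exact this
      exact hc0 i (congrArg Subtype.val this)
    have hroot : ∀ i t, c i ∈ W t → (P i).IsRoot t := by
      intro i t hmem
      have hci : ci i ∈ W' t := by
        obtain ⟨y, hy, hyv⟩ := hmem
        have : y = ci i := Subtype.ext hyv
        rwa [this] at hy
      rw [Submodule.mem_span_range_iff_exists_fun] at hci
      obtain ⟨g, hg⟩ := hci
      rw [Fin.sum_univ_two] at hg
      simp only [Matrix.cons_val_zero, Matrix.cons_val_one, Matrix.head_cons] at hg
      have hsum : ci i = ∑ j : Fin 3, a i j • b j := by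
        conv_lhs => rw [← b.sum_repr (ci i)]
      have hzero : (g 0 - a i 0) • b 0 + (g 1 - a i 1) • b 1
          + (g 0 * t + g 1 * t ^ 2 - a i 2) • b 2 = 0 := by
        have h1 : g 0 • u t + g 1 • w t - ci i = 0 := by rw [hg]; abel
        rw [hcomb t (g 0) (g 1), hsum] at h1
        simp only [Fin.sum_univ_three, Matrix.cons_val_zero, Matrix.cons_val_one,
          Matrix.head_cons, Matrix.cons_val_two, Matrix.tail_cons] at h1
        linear_combination (norm := module) h1
      have := hbli (![g 0 - a i 0, g 1 - a i 1, g 0 * t + g 1 * t ^ 2 - a i 2]) (by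
        rw [Fin.sum_univ_three]
        simp only [Matrix.cons_val_zero, Matrix.cons_val_one, Matrix.head_cons,
          Matrix.cons_val_two, Matrix.tail_cons]
        exact hzero)
      have e0 : g 0 = a i 0 := sub_eq_zero.mp (this 0)
      have e1 : g 1 = a i 1 := sub_eq_zero.mp (this 1)
      have e2 : g 0 * t + g 1 * t ^ 2 - a i 2 = 0 := this 2
      rw [e0, e1] at e2
      simp only [Polynomial.IsRoot, P, Polynomial.eval_sub, Polynomial.eval_add,
        Polynomial.eval_mul, Polynomial.eval_C, Polynomial.eval_pow, Polynomial.eval_X]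
      linear_combination e2
    -- good parameters
    let Bad : Set ℂ := ⋃ i, {t | (P i).IsRoot t}
    have hBadFin : Bad.Finite :=
      Set.finite_iUnion fun i => Polynomial.finite_setOf_isRoot (hPne i)
    have hGoodInf : (Badᶜ : Set ℂ).Infinite := hBadFin.infinite_compl
    have hsub : W '' Badᶜ ⊆
        {W : Submodule ℂ (Fin 4 → ℂ) | Module.finrank ℂ W = 2 ∧ (∀ i, c i ∉ W) ∧
          ∀ i, ∀ p ∈ W, ((C i) *ᵥ p) ⬝ᵥ ℓ i = 0} := by
      rintro _ ⟨t, ht, rfl⟩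
      refine ⟨hWfr t, ?_, (hcond (W t)).mpr (hWK t)⟩
      intro i hmem
      exact ht (Set.mem_iUnion.mpr ⟨i, hroot i t hmem⟩)
    exact ((hGoodInf.image (hWinj.injOn)).mono hsub)
end
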